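/- arXiv:2511.18073 — 3 statements merged into one kernel-verified Lean document; each statement's English description precedes it below -/
import Mathlib

section
/- Let k be a field and q ∈ k. Then the center of the deformed incidence algebra I_q(T²_s) is trivial: it consists exactly of the scalar multiples of the identity, i.e. Z(I_q(T²_s)) = k·1 is 1-dimensional over k. -/
/-! ### The deformed incidence algebra `I_q(T²_s)` of the simplicial torus -/

/-- Faces of the 7-vertex triangulation of the torus (vertex set `ZMod 7`): the 7 singletons,
the 21 two-element subsets (edges), and the 14 triangles `{i, i+1, i+3}` and `{i, i+2, i+3}`. -/
def IsTorusFace (s : Finset (ZMod 7)) : Prop :=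
  s.card = 1 ∨ s.card = 2 ∨ ∃ i : ZMod 7, s = {i, i + 1, i + 3} ∨ s = {i, i + 2, i + 3}

instance : DecidablePred IsTorusFace := fun s => by unfold IsTorusFace; infer_instance

/-- The vertices of the quiver: the 42 faces of the triangulation. -/
def TorusFace : Type := {s : Finset (ZMod 7) // IsTorusFace s}

instance : DecidableEq TorusFace := inferInstanceAs (DecidableEq {s : Finset (ZMod 7) // IsTorusFace s})
instance : Fintype TorusFace := inferInstanceAs (Fintype {s : Finset (ZMod 7) // IsTorusFace s})

/-- The arrows of the quiver: inclusions of a face into a face of one higher dimension,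
i.e. the 42 arrows `α^a_E : {a} → E` and the 42 arrows `β^E_T : E → T`. -/
def TorusArrow : Type :=
  {p : TorusFace × TorusFace // p.1.val ⊆ p.2.val ∧ p.2.val.card = p.1.val.card + 1}

instance : DecidableEq TorusArrow :=
  inferInstanceAs (DecidableEq {p : TorusFace × TorusFace //
    p.1.val ⊆ p.2.val ∧ p.2.val.card = p.1.val.card + 1})

/-- Generators of the free algebra: one generator for each vertex (the idempotent `e_v`)
and one for each arrow. -/
def TorusGen : Type := TorusFace ⊕ TorusArrow

variable (k : Type) [Field k]

/-- The idempotent generator attached to a face. -/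
noncomputable def eGen (v : TorusFace) : FreeAlgebra k TorusGen :=
  FreeAlgebra.ι k (Sum.inl v)

/-- The generator attached to an arrow. -/
noncomputable def aGen (x : TorusArrow) : FreeAlgebra k TorusGen :=
  FreeAlgebra.ι k (Sum.inr x)

/-- `(a, b, c)` is a positively oriented corner of a triangle of the triangulation:
the triangle is `{a, b, c}`, the corner is at `a`, and the direction from the edge `{a, b}` to
the edge `{a, c}` is positive for the chosen orientation of the torus.  The positive cyclic
orders are `(i, i+1, i+3)` on the triangles `T¹_i` and `(i, i+3, i+2)` on the triangles
`T²_i`. -/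
def PosCorner (a b c : ZMod 7) : Prop :=
  ∃ i : ZMod 7,
    (a, b, c) = (i, i + 1, i + 3) ∨ (a, b, c) = (i + 1, i + 3, i) ∨
    (a, b, c) = (i + 3, i, i + 1) ∨ (a, b, c) = (i, i + 3, i + 2) ∨
    (a, b, c) = (i + 3, i + 2, i) ∨ (a, b, c) = (i + 2, i, i + 3)

instance : ∀ a b c : ZMod 7, Decidable (PosCorner a b c) := fun a b c => by
  unfold PosCorner; infer_instance

lemma posCorner_facts : ∀ a b c : ZMod 7, PosCorner a b c →
    IsTorusFace {a} ∧ IsTorusFace {a, b} ∧ IsTorusFace {a, c} ∧ IsTorusFace {a, b, c} ∧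
    ({a} : Finset (ZMod 7)) ⊆ {a, b} ∧ ({a} : Finset (ZMod 7)) ⊆ {a, c} ∧
    ({a, b} : Finset (ZMod 7)) ⊆ {a, b, c} ∧ ({a, c} : Finset (ZMod 7)) ⊆ {a, b, c} ∧
    ({a} : Finset (ZMod 7)).card = 1 ∧
    ({a, b} : Finset (ZMod 7)).card = 2 ∧ ({a, c} : Finset (ZMod 7)).card = 2 ∧
    ({a, b, c} : Finset (ZMod 7)).card = 3 := by decide

/-- The arrow `α^a_{{a,b}}` attached to a positively oriented corner. -/
noncomputable def alphaB (a b c : ZMod 7) (h : PosCorner a b c) : TorusArrow :=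
  ⟨(⟨{a}, ((posCorner_facts a b c h).1)⟩, ⟨{a, b}, ((posCorner_facts a b c h).2.1)⟩), ((posCorner_facts a b c h).2.2.2.2.1), by
      show ({a, b} : Finset (ZMod 7)).card = ({a} : Finset (ZMod 7)).card + 1
      have h1 := (posCorner_facts a b c h).2.2.2.2.2.2.2.2.2.1
      have h2 := (posCorner_facts a b c h).2.2.2.2.2.2.2.2.1
      omega⟩

/-- The arrow `α^a_{{a,c}}` attached to a positively oriented corner. -/
noncomputable def alphaC (a b c : ZMod 7) (h : PosCorner a b c) : TorusArrow :=
  ⟨(⟨{a}, ((posCorner_facts a b c h).1)⟩, ⟨{a, c}, ((posCorner_facts a b c h).2.2.1)⟩), ((posCorner_facts a b c h).2.2.2.2.2.1), by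
      show ({a, c} : Finset (ZMod 7)).card = ({a} : Finset (ZMod 7)).card + 1
      have h1 := (posCorner_facts a b c h).2.2.2.2.2.2.2.2.2.2.1
      have h2 := (posCorner_facts a b c h).2.2.2.2.2.2.2.2.1
      omega⟩

/-- The arrow `β^{{a,b}}_{{a,b,c}}` attached to a positively oriented corner. -/
noncomputable def betaB (a b c : ZMod 7) (h : PosCorner a b c) : TorusArrow :=
  ⟨(⟨{a, b}, ((posCorner_facts a b c h).2.1)⟩, ⟨{a, b, c}, ((posCorner_facts a b c h).2.2.2.1)⟩), ((posCorner_facts a b c h).2.2.2.2.2.2.1), by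
      show ({a, b, c} : Finset (ZMod 7)).card = ({a, b} : Finset (ZMod 7)).card + 1
      have h1 := (posCorner_facts a b c h).2.2.2.2.2.2.2.2.2.2.2
      have h2 := (posCorner_facts a b c h).2.2.2.2.2.2.2.2.2.1
      omega⟩

/-- The arrow `β^{{a,c}}_{{a,b,c}}` attached to a positively oriented corner. -/
noncomputable def betaC (a b c : ZMod 7) (h : PosCorner a b c) : TorusArrow :=
  ⟨(⟨{a, c}, ((posCorner_facts a b c h).2.2.1)⟩, ⟨{a, b, c}, ((posCorner_facts a b c h).2.2.2.1)⟩), ((posCorner_facts a b c h).2.2.2.2.2.2.2.1), by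
      show ({a, b, c} : Finset (ZMod 7)).card = ({a, c} : Finset (ZMod 7)).card + 1
      have h1 := (posCorner_facts a b c h).2.2.2.2.2.2.2.2.2.2.2
      have h2 := (posCorner_facts a b c h).2.2.2.2.2.2.2.2.2.2.1
      omega⟩

/-- The defining relations of the deformed incidence algebra `I_q(T²_s)`: the vertex generators
are orthogonal idempotents summing to `1`, each arrow `x : v → w` satisfies
`x = e_w * x * e_v`, and for every positively oriented corner `(a, b, c)` of a triangle,
`β^{{a,b}}_{{a,b,c}} α^a_{{a,b}} = q • β^{{a,c}}_{{a,b,c}} α^a_{{a,c}}`. -/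
inductive TorusRel (q : k) : FreeAlgebra k TorusGen → FreeAlgebra k TorusGen → Prop
  | idem (v : TorusFace) : TorusRel q (eGen k v * eGen k v) (eGen k v)
  | orth (v w : TorusFace) (h : v ≠ w) : TorusRel q (eGen k v * eGen k w) 0
  | sum_one : TorusRel q (∑ v : TorusFace, eGen k v) 1
  | supp (x : TorusArrow) :
      TorusRel q (aGen k x) (eGen k x.val.2 * aGen k x * eGen k x.val.1)
  | deform (a b c : ZMod 7) (h : PosCorner a b c) :
      TorusRel q (aGen k (betaB a b c h) * aGen k (alphaB a b c h))
        (q • (aGen k (betaC a b c h) * aGen k (alphaC a b c h)))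

/-- The deformed incidence algebra `I_q(T²_s)`. -/
noncomputable def DeformedTorusAlgebra (q : k) : Type := RingQuot (TorusRel k q)

noncomputable instance (q : k) : Ring (DeformedTorusAlgebra k q) :=
  inferInstanceAs (Ring (RingQuot (TorusRel k q)))

noncomputable instance (q : k) : Algebra k (DeformedTorusAlgebra k q) :=
  inferInstanceAs (Algebra k (RingQuot (TorusRel k q)))

set_option maxHeartbeats 1000000 in
lemma posCorner_ne : ∀ a b c : ZMod 7, PosCorner a b c → a ≠ b ∧ a ≠ c ∧ b ≠ c := by decide

set_option maxHeartbeats 1000000 in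
lemma posCorner_not_swap : ∀ a b c : ZMod 7, PosCorner a b c → ¬ PosCorner a c b := by decide

set_option maxHeartbeats 4000000 in
lemma corner_exists_T1 : ∀ i a : ZMod 7, a ∈ ({i, i+1, i+3} : Finset (ZMod 7)) →
    ∃ b c, PosCorner a b c ∧ ({i, i+1, i+3} : Finset (ZMod 7)) = {a, b, c} := by decide

set_option maxHeartbeats 4000000 in
lemma corner_exists_T2 : ∀ i a : ZMod 7, a ∈ ({i, i+2, i+3} : Finset (ZMod 7)) →
    ∃ b c, PosCorner a b c ∧ ({i, i+2, i+3} : Finset (ZMod 7)) = {a, b, c} := by decide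

lemma tri_card : ∀ i : ZMod 7, ({i, i+1, i+3} : Finset (ZMod 7)).card = 3 ∧ ({i, i+2, i+3} : Finset (ZMod 7)).card = 3 := by decide
namespace TorusCenter

abbrev N7 := Finset (ZMod 7)

def Valid (p : N7 × N7) : Prop := p.1 ⊆ p.2 ∧ IsTorusFace p.1 ∧ IsTorusFace p.2

instance : DecidablePred Valid := fun p => by unfold Valid; infer_instance

abbrev PIdx : Type := {p : N7 × N7 // Valid p}

instance : Fintype PIdx := (inferInstance : Fintype {p : N7 × N7 // Valid p})
instance : DecidableEq PIdx := (inferInstance : DecidableEq {p : N7 × N7 // Valid p})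

def Special (F H G : N7) : Prop :=
  ∃ a b c : ZMod 7, PosCorner a b c ∧ F = {a} ∧ H = {a, b} ∧ G = {a, b, c}

instance : ∀ F H G, Decidable (Special F H G) := fun F H G => by unfold Special; infer_instance

lemma face_card_le {s : N7} (h : IsTorusFace s) : s.card ≤ 3 := by
  rcases h with h | h | ⟨i, rfl | rfl⟩ <;> first | omega | exact (tri_card i).1.le | exact (tri_card i).2.le

lemma face_card_pos {s : N7} (h : IsTorusFace s) : 1 ≤ s.card := by
  rcases h with h | h | ⟨i, rfl | rfl⟩ <;> first | omega | exact le_trans (by norm_num) (tri_card i).1.ge | exact le_trans (by norm_num) (tri_card i).2.ge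

lemma special_cards {F H G : N7} (h : Special F H G) : F.card = 1 ∧ H.card = 2 ∧ G.card = 3 := by
  obtain ⟨a, b, c, hpc, rfl, rfl, rfl⟩ := h
  have h1 := (posCorner_facts a b c hpc).2.2.2.2.2.2.2.2.1
  have h2 := (posCorner_facts a b c hpc).2.2.2.2.2.2.2.2.2.1
  have h3 := (posCorner_facts a b c hpc).2.2.2.2.2.2.2.2.2.2.2
  exact ⟨h1, h2, h3⟩

lemma corner_exists {F G : N7} (hG : IsTorusFace G) (hcard : G.card = 3) (hF : F.card = 1)
    (hsub : F ⊆ G) : ∃ a b c, PosCorner a b c ∧ F = {a} ∧ G = {a, b, c} := by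
  obtain ⟨a, rfl⟩ := Finset.card_eq_one.mp hF
  have ha : a ∈ G := hsub (Finset.mem_singleton_self a)
  rcases hG with h | h | ⟨i, rfl | rfl⟩
  · omega
  · omega
  · obtain ⟨b, c, h1, h2⟩ := corner_exists_T1 i a ha; exact ⟨a, b, c, h1, rfl, h2⟩
  · obtain ⟨b, c, h1, h2⟩ := corner_exists_T2 i a ha; exact ⟨a, b, c, h1, rfl, h2⟩

variable (k : Type) [Field k]

def cc (q : k) (F H G : N7) : k :=
  if F ⊆ H ∧ H ⊆ G then (if Special F H G then q else 1) else 0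

lemma cocycle (q : k) {F H H' G : N7} (hFH : F ⊆ H) (hHH' : H ⊆ H') (hH'G : H' ⊆ G)
    (hF : IsTorusFace F) (hH : IsTorusFace H) (hH' : IsTorusFace H') (hG : IsTorusFace G) :
    cc k q F H G * cc k q H H' G = cc k q F H' G * cc k q F H H' := by
  have e1 : cc k q F H G = if Special F H G then q else 1 := by
    rw [cc, if_pos ⟨hFH, hHH'.trans hH'G⟩]
  have e2 : cc k q H H' G = if Special H H' G then q else 1 := by
    rw [cc, if_pos ⟨hHH', hH'G⟩]
  have e3 : cc k q F H' G = if Special F H' G then q else 1 := by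
    rw [cc, if_pos ⟨hFH.trans hHH', hH'G⟩]
  have e4 : cc k q F H H' = if Special F H H' then q else 1 := by
    rw [cc, if_pos ⟨hFH, hHH'⟩]
  rw [e1, e2, e3, e4]
  by_cases s1 : Special F H G
  · obtain ⟨c1, c2, c3⟩ := special_cards s1
    have hs2 : ¬ Special H H' G := fun s2 => by have := (special_cards s2).1; omega
    have hcH'3 : H'.card ≤ 3 := c3 ▸ Finset.card_le_card hH'G
    have hcH'2 : 2 ≤ H'.card := c2 ▸ Finset.card_le_card hHH'
    rcases (by omega : H'.card = 2 ∨ H'.card = 3) with h2 | h3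
    · have hH'H : H = H' := Finset.eq_of_subset_of_card_le hHH' (by omega)
      subst hH'H
      have hs4 : ¬ Special F H H := fun s4 => by
        have := (special_cards s4).2.1; have := (special_cards s4).2.2; omega
      rw [if_pos s1, if_neg hs2, if_neg hs4]
    · have hH'G' : H' = G := Finset.eq_of_subset_of_card_le hH'G (by omega)
      subst hH'G'
      have hs3 : ¬ Special F H' H' := fun s3 => by
        have := (special_cards s3).2.1; have := (special_cards s3).2.2; omega
      rw [if_pos s1, if_neg hs2, if_neg hs3]; ring
  · by_cases s2 : Special H H' G
    · have hc1 := (special_cards s2).1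
      have hFHeq : F = H := Finset.eq_of_subset_of_card_le hFH (by
        have := face_card_pos hF; omega)
      subst hFHeq
      have hs4 : ¬ Special F F H' := fun s4 => by
        have := (special_cards s4).1; have := (special_cards s4).2.1; omega
      rw [if_neg s1, if_pos s2, if_neg hs4]; ring
    · have hs3 : ¬ Special F H' G := by
        intro s3
        obtain ⟨d1, d2, d3⟩ := special_cards s3
        have h1 : 1 ≤ H.card := (d1 ▸ Finset.card_le_card hFH : 1 ≤ H.card)
        have h2 : H.card ≤ 2 := d2 ▸ Finset.card_le_card hHH'
        rcases (by omega : H.card = 1 ∨ H.card = 2) with hh | hh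
        · have : F = H := Finset.eq_of_subset_of_card_le hFH (by omega)
          exact s2 (this ▸ s3)
        · have : H = H' := Finset.eq_of_subset_of_card_le hHH' (by omega)
          exact s1 (this ▸ s3)
      have hs4 : ¬ Special F H H' := by
        intro s4
        obtain ⟨d1, d2, d3⟩ := special_cards s4
        have : H' = G := Finset.eq_of_subset_of_card_le hH'G
          (by have := face_card_le hG; omega)
        exact s1 (this ▸ s4)
      rw [if_neg s1, if_neg s2, if_neg hs3, if_neg hs4]
def AlgA (q : k) : Type := PIdx → k

namespace AlgA

variable {k} (q : k)

instance : AddCommGroup (AlgA k q) := (inferInstance : AddCommGroup (PIdx → k))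
instance : Module k (AlgA k q) := (inferInstance : Module k (PIdx → k))

/-- Extension by zero to all pairs. -/
def ext0 (f : AlgA k q) (X Y : N7) : k := if h : Valid (X, Y) then f ⟨(X, Y), h⟩ else 0

lemma valid_of_ext0_ne {f : AlgA k q} {X Y : N7} (h : ext0 q f X Y ≠ 0) : Valid (X, Y) := by
  by_contra hv; exact h (dif_neg hv)

lemma ext0_apply (f : AlgA k q) (p : PIdx) : ext0 q f p.val.1 p.val.2 = f p := by
  obtain ⟨⟨X, Y⟩, hv⟩ := p; exact dif_pos hv

instance : Mul (AlgA k q) :=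
  ⟨fun f g => fun p => ∑ H : N7, cc k q p.val.1 H p.val.2 * ext0 q f H p.val.2 * ext0 q g p.val.1 H⟩

lemma mul_apply (f g : AlgA k q) (p : PIdx) :
    (f * g) p = ∑ H : N7, cc k q p.val.1 H p.val.2 * ext0 q f H p.val.2 * ext0 q g p.val.1 H := rfl

lemma ext0_mul (f g : AlgA k q) (X Y : N7) :
    ext0 q (f * g) X Y = ∑ H : N7, cc k q X H Y * ext0 q f H Y * ext0 q g X H := by
  by_cases hv : Valid (X, Y)
  · rw [ext0, dif_pos hv]; rfl
  · rw [ext0, dif_neg hv]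
    refine (Finset.sum_eq_zero fun H _ => ?_).symm
    by_cases h1 : ext0 q f H Y = 0
    · rw [h1]; ring
    by_cases h2 : ext0 q g X H = 0
    · rw [h2]; ring
    have hv1 := valid_of_ext0_ne q h1
    have hv2 := valid_of_ext0_ne q h2
    exact absurd ⟨hv2.1.trans hv1.1, hv2.2.1, hv1.2.2⟩ hv

instance : One (AlgA k q) := ⟨fun p => if p.val.1 = p.val.2 then 1 else 0⟩

lemma one_apply (p : PIdx) : (1 : AlgA k q) p = if p.val.1 = p.val.2 then 1 else 0 := rfl

lemma not_special_self_right (F G : N7) : ¬ Special F G G := fun h => by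
  have := (special_cards h).2.1; have := (special_cards h).2.2; omega

lemma not_special_self_left (F G : N7) : ¬ Special F F G := fun h => by
  have := (special_cards h).1; have := (special_cards h).2.1; omega

protected lemma one_mul (f : AlgA k q) : 1 * f = f := by
  funext p
  obtain ⟨⟨F, G⟩, hv⟩ := p
  rw [mul_apply]
  rw [Finset.sum_eq_single G]
  · have h1 : ext0 q (1 : AlgA k q) G G = 1 := by
      rw [ext0, dif_pos ⟨le_refl G, hv.2.2, hv.2.2⟩, one_apply]; simp
    have h2 : cc k q F G G = 1 := by
      rw [cc, if_pos ⟨hv.1, le_refl G⟩, if_neg (not_special_self_right F G)]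
    rw [h1, h2, ext0, dif_pos hv]; ring
  · intro H _ hH
    have : ext0 q (1 : AlgA k q) H G = 0 := by
      rw [ext0]; split
      · rw [one_apply]; exact if_neg hH
      · rfl
    rw [this]; ring
  · intro h; exact absurd (Finset.mem_univ G) h

protected lemma mul_one (f : AlgA k q) : f * 1 = f := by
  funext p
  obtain ⟨⟨F, G⟩, hv⟩ := p
  rw [mul_apply]
  rw [Finset.sum_eq_single F]
  · have h1 : ext0 q (1 : AlgA k q) F F = 1 := by
      rw [ext0, dif_pos ⟨le_refl F, hv.2.1, hv.2.1⟩, one_apply]; simp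
    have h2 : cc k q F F G = 1 := by
      rw [cc, if_pos ⟨le_refl F, hv.1⟩, if_neg (not_special_self_left F G)]
    rw [h1, h2, ext0, dif_pos hv]; ring
  · intro H _ hH
    have : ext0 q (1 : AlgA k q) F H = 0 := by
      rw [ext0]; split
      · rw [one_apply]; exact if_neg (Ne.symm hH)
      · rfl
    rw [this]; ring
  · intro h; exact absurd (Finset.mem_univ F) h

lemma ext0_add (f g : AlgA k q) (X Y : N7) :
    ext0 q (f + g) X Y = ext0 q f X Y + ext0 q g X Y := by
  rw [ext0, ext0, ext0]; split
  · rfl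
  · simp

lemma ext0_zero (X Y : N7) : ext0 q (0 : AlgA k q) X Y = 0 := by
  rw [ext0]; split <;> rfl

lemma ext0_smul (r : k) (f : AlgA k q) (X Y : N7) :
    ext0 q (r • f) X Y = r * ext0 q f X Y := by
  rw [ext0, ext0]; split
  · rfl
  · simp

protected lemma mul_assoc (f g h : AlgA k q) : f * g * h = f * (g * h) := by
  funext p
  obtain ⟨⟨F, G⟩, hv⟩ := p
  rw [mul_apply, mul_apply]
  have key : ∀ H H' : N7,
      (cc k q F H G * cc k q H H' G) * (ext0 q f H' G * ext0 q g H H' * ext0 q h F H)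
      = cc k q F H' G * ext0 q f H' G * (cc k q F H H' * ext0 q g H H' * ext0 q h F H) := by
    intro H H'
    by_cases h1 : ext0 q f H' G = 0
    · rw [h1]; ring
    by_cases h2 : ext0 q g H H' = 0
    · rw [h2]; ring
    by_cases h3 : ext0 q h F H = 0
    · rw [h3]; ring
    have v1 := valid_of_ext0_ne q h1
    have v2 := valid_of_ext0_ne q h2
    have v3 := valid_of_ext0_ne q h3
    rw [show cc k q F H G * cc k q H H' G = cc k q F H' G * cc k q F H H' from
      cocycle k q v3.1 v2.1 v1.1 v3.2.1 v3.2.2 v2.2.2 v1.2.2]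
    ring
  calc (∑ H : N7, cc k q F H G * ext0 q (f * g) H G * ext0 q h F H)
      = ∑ H : N7, ∑ H' : N7,
          (cc k q F H G * cc k q H H' G) * (ext0 q f H' G * ext0 q g H H' * ext0 q h F H) := by
        refine Finset.sum_congr rfl fun H _ => ?_
        rw [ext0_mul, Finset.mul_sum, Finset.sum_mul]
        exact Finset.sum_congr rfl fun H' _ => by ring
    _ = ∑ H' : N7, ∑ H : N7,
          (cc k q F H G * cc k q H H' G) * (ext0 q f H' G * ext0 q g H H' * ext0 q h F H) :=
        Finset.sum_comm
    _ = ∑ H' : N7, cc k q F H' G * ext0 q f H' G * ext0 q (g * h) F H' := by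
        refine Finset.sum_congr rfl fun H' _ => ?_
        rw [ext0_mul, Finset.mul_sum]
        exact Finset.sum_congr rfl fun H _ => key H H'

protected lemma left_distrib (f g h : AlgA k q) : f * (g + h) = f * g + f * h := by
  funext p
  erw [Pi.add_apply, mul_apply, mul_apply, mul_apply, ← Finset.sum_add_distrib]
  exact Finset.sum_congr rfl fun H _ => by rw [ext0_add]; ring

protected lemma right_distrib (f g h : AlgA k q) : (f + g) * h = f * h + g * h := by
  funext p
  erw [Pi.add_apply, mul_apply, mul_apply, mul_apply, ← Finset.sum_add_distrib]
  exact Finset.sum_congr rfl fun H _ => by rw [ext0_add]; ring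

protected lemma zero_mul (f : AlgA k q) : 0 * f = 0 := by
  funext p
  rw [mul_apply]
  exact Finset.sum_eq_zero fun H _ => by rw [ext0_zero]; ring

protected lemma mul_zero (f : AlgA k q) : f * 0 = 0 := by
  funext p
  rw [mul_apply]
  exact Finset.sum_eq_zero fun H _ => by rw [ext0_zero]; ring

noncomputable instance : Ring (AlgA k q) :=
  { (inferInstance : AddCommGroup (AlgA k q)) with
    mul := (· * ·), one := 1
    mul_assoc := AlgA.mul_assoc q
    one_mul := AlgA.one_mul q
    mul_one := AlgA.mul_one q
    left_distrib := AlgA.left_distrib q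
    right_distrib := AlgA.right_distrib q
    zero_mul := AlgA.zero_mul q
    mul_zero := AlgA.mul_zero q }

protected lemma smul_mul (r : k) (f g : AlgA k q) : r • f * g = r • (f * g) := by
  funext p
  erw [Pi.smul_apply, mul_apply, mul_apply, smul_eq_mul, Finset.mul_sum]
  exact Finset.sum_congr rfl fun H _ => by rw [ext0_smul]; ring

protected lemma mul_smul (r : k) (f g : AlgA k q) : f * r • g = r • (f * g) := by
  funext p
  erw [Pi.smul_apply, mul_apply, mul_apply, smul_eq_mul, Finset.mul_sum]
  exact Finset.sum_congr rfl fun H _ => by rw [ext0_smul]; ring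

noncomputable instance : Algebra k (AlgA k q) :=
  Algebra.ofModule (AlgA.smul_mul q) (AlgA.mul_smul q)


def bas (s t : N7) : AlgA k q := fun p => if p.val = (s, t) then 1 else 0

lemma bas_apply (s t : N7) (p : PIdx) :
    bas q s t p = if p.val = (s, t) then 1 else 0 := rfl

lemma smul_apply' (r : k) (f : AlgA k q) (p : PIdx) : (r • f) p = r * f p := rfl

lemma zero_apply' (p : PIdx) : (0 : AlgA k q) p = 0 := rfl

lemma ext0_bas (s t X Y : N7) :
    ext0 q (bas q s t) X Y = if (X, Y) = (s, t) ∧ Valid (s, t) then 1 else 0 := by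
  rw [ext0]
  split
  · rename_i h
    rw [bas_apply]
    by_cases he : ((X, Y) : N7 × N7) = (s, t)
    · rw [if_pos he, if_pos ⟨he, he ▸ h⟩]
    · rw [if_neg he, if_neg (fun hc => he hc.1)]
  · rename_i h
    by_cases he : ((X, Y) : N7 × N7) = (s, t) ∧ Valid (s, t)
    · exact absurd (he.1 ▸ he.2) h
    · rw [if_neg he]

lemma bas_mul_bas {s t u v : N7} (hst : Valid (s, t)) (huv : Valid (u, v)) :
    bas q s t * bas q u v = if v = s then cc k q u s t • bas q u t else (0 : AlgA k q) := by
  funext p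
  obtain ⟨⟨F, G⟩, hp⟩ := p
  rw [mul_apply]
  rw [Finset.sum_eq_single s]
  rotate_left
  · intro H _ hH
    have : ext0 q (bas q s t) H G = 0 := by
      rw [ext0_bas, if_neg]
      rintro ⟨he, -⟩
      exact hH (congrArg Prod.fst he)
    rw [this]; ring
  · intro h; exact absurd (Finset.mem_univ s) h
  · rw [ext0_bas, ext0_bas]
    have e1 : (if ((s, G) : N7 × N7) = (s, t) ∧ Valid (s, t) then (1 : k) else 0)
        = if G = t then 1 else 0 := by
      by_cases hG : G = t
      · subst hG; rw [if_pos ⟨rfl, hst⟩, if_pos rfl]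
      · rw [if_neg (fun hc => hG (by injection hc.1)), if_neg hG]
    have e2 : (if ((F, s) : N7 × N7) = (u, v) ∧ Valid (u, v) then (1 : k) else 0)
        = if F = u ∧ v = s then 1 else 0 := by
      by_cases hFv : F = u ∧ v = s
      · obtain ⟨h1, h2⟩ := hFv; subst h1; subst h2; rw [if_pos ⟨rfl, huv⟩, if_pos ⟨rfl, rfl⟩]
      · rw [if_neg, if_neg hFv]
        rintro ⟨hc, -⟩
        injection hc with hc1 hc2
        exact hFv ⟨hc1, hc2.symm⟩
    rw [e1, e2]
    by_cases hvs : v = s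
    · rw [if_pos hvs, smul_apply', bas_apply]
      by_cases hF : F = u
      · by_cases hG : G = t
        · subst hG; subst hF; subst hvs
          rw [if_pos rfl, if_pos ⟨rfl, rfl⟩, if_pos rfl]
          ring
        · rw [if_neg hG, if_neg (fun hc : ((F, G) : N7 × N7) = (u, t) => hG (by injection hc))]
          ring
      · rw [if_neg (fun hc : F = u ∧ v = s => hF hc.1),
          if_neg (fun hc : ((F, G) : N7 × N7) = (u, t) => hF (by injection hc))]
        ring
    · rw [if_neg hvs, zero_apply', if_neg (fun hc : F = u ∧ v = s => hvs hc.2)]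
      ring

end AlgA
namespace AlgA

variable {k : Type} [Field k] (q : k)

lemma mul_bas_apply {u v : N7} (huv : Valid (u, v)) (f : AlgA k q) (p : PIdx) :
    (f * bas q u v) p = if p.val.1 = u then cc k q u v p.val.2 * ext0 q f v p.val.2 else 0 := by
  obtain ⟨⟨F, G⟩, hp⟩ := p
  rw [mul_apply]
  rw [Finset.sum_eq_single v]
  rotate_left
  · intro H _ hH
    have : ext0 q (bas q u v) F H = 0 := by
      rw [ext0_bas, if_neg]
      rintro ⟨he, -⟩
      exact hH (congrArg Prod.snd he)
    rw [this]; ring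
  · intro h; exact absurd (Finset.mem_univ v) h
  · rw [ext0_bas]
    by_cases hF : F = u
    · subst hF
      rw [if_pos ⟨rfl, huv⟩, if_pos rfl]; ring
    · rw [if_neg (fun hc => hF (by injection hc.1)), if_neg hF]; ring

lemma bas_mul_apply {u v : N7} (huv : Valid (u, v)) (f : AlgA k q) (p : PIdx) :
    (bas q u v * f) p = if p.val.2 = v then cc k q p.val.1 u v * ext0 q f p.val.1 u else 0 := by
  obtain ⟨⟨F, G⟩, hp⟩ := p
  rw [mul_apply]
  rw [Finset.sum_eq_single u]
  rotate_left
  · intro H _ hH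
    have : ext0 q (bas q u v) H G = 0 := by
      rw [ext0_bas, if_neg]
      rintro ⟨he, -⟩
      exact hH (congrArg Prod.fst he)
    rw [this]; ring
  · intro h; exact absurd (Finset.mem_univ u) h
  · rw [ext0_bas]
    by_cases hG : G = v
    · subst hG
      rw [if_pos ⟨rfl, huv⟩, if_pos rfl]; ring
    · rw [if_neg (fun hc => hG (by injection hc.1)), if_neg hG]; ring

lemma cc_left_one {F G : N7} (h : F ⊆ G) : cc k q F F G = 1 := by
  rw [cc, if_pos ⟨le_refl F, h⟩, if_neg (not_special_self_left F G)]

lemma cc_right_one {F G : N7} (h : F ⊆ G) : cc k q F G G = 1 := by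
  rw [cc, if_pos ⟨h, le_refl G⟩, if_neg (not_special_self_right F G)]

/-- Central elements vanish off the diagonal. -/
lemma central_offdiag {f : AlgA k q} (hf : ∀ g : AlgA k q, g * f = f * g)
    {F G : N7} (hp : Valid (F, G)) (hFG : F ≠ G) : f ⟨(F, G), hp⟩ = 0 := by
  have hFF : Valid (F, F) := ⟨le_refl F, hp.2.1, hp.2.1⟩
  have h := congrFun (hf (bas q F F)) ⟨(F, G), hp⟩
  rw [bas_mul_apply q hFF, mul_bas_apply q hFF] at h
  rw [if_neg (fun hh : G = F => hFG hh.symm), if_pos rfl, cc_left_one q hp.1] at h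
  have e : ext0 q f F G = f ⟨(F, G), hp⟩ := dif_pos hp
  rw [e, one_mul] at h
  exact h.symm
  
/-- Central elements are constant along valid pairs. -/
lemma central_diag_eq {f : AlgA k q} (hf : ∀ g : AlgA k q, g * f = f * g)
    {F G : N7} (hp : Valid (F, G)) :
    f ⟨(F, F), ⟨le_refl F, hp.2.1, hp.2.1⟩⟩ = f ⟨(G, G), ⟨le_refl G, hp.2.2, hp.2.2⟩⟩ := by
  have h := congrFun (hf (bas q F G)) ⟨(F, G), hp⟩
  rw [bas_mul_apply q hp, mul_bas_apply q hp] at h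
  rw [if_pos rfl, if_pos rfl, cc_left_one q hp.1, cc_right_one q hp.1] at h
  have e1 : ext0 q f F F = f ⟨(F, F), ⟨le_refl F, hp.2.1, hp.2.1⟩⟩ := dif_pos _
  have e2 : ext0 q f G G = f ⟨(G, G), ⟨le_refl G, hp.2.2, hp.2.2⟩⟩ := dif_pos _
  rw [e1, e2, one_mul, one_mul] at h
  exact h

end AlgA
namespace AlgA

variable {k : Type} [Field k] (q : k)

lemma face_singleton (a : ZMod 7) : IsTorusFace {a} := Or.inl (Finset.card_singleton a)

def vsing (a : ZMod 7) : Valid ({a}, {a}) :=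
  ⟨le_refl _, face_singleton a, face_singleton a⟩

def vdiag {s : N7} (hs : IsTorusFace s) : Valid (s, s) := ⟨le_refl _, hs, hs⟩

lemma central_eq_scalar (f : AlgA k q) (hf : ∀ g : AlgA k q, g * f = f * g) :
    f = algebraMap k (AlgA k q) (f ⟨({0}, {0}), vsing 0⟩) := by
  set lam := f ⟨({0}, {0}), vsing 0⟩ with hlam
  have sing : ∀ a : ZMod 7, f ⟨({a}, {a}), vsing a⟩ = lam := by
    intro a
    by_cases h0 : a = 0
    · subst h0; rfl
    have hface : IsTorusFace ({0, a} : N7) :=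
      Or.inr (Or.inl (Finset.card_pair (fun h => h0 h.symm)))
    have v1 : Valid ({a}, ({0, a} : N7)) := by
      refine ⟨?_, face_singleton a, hface⟩
      simp [Finset.singleton_subset_iff]
    have v2 : Valid ({0}, ({0, a} : N7)) := by
      refine ⟨?_, face_singleton 0, hface⟩
      simp [Finset.singleton_subset_iff]
    have e1 := central_diag_eq q hf v1
    have e2 := central_diag_eq q hf v2
    exact e1.trans e2.symm
  have diag : ∀ (s : N7) (hs : IsTorusFace s), f ⟨(s, s), vdiag hs⟩ = lam := by
    intro s hs
    obtain ⟨a, ha⟩ := Finset.card_pos.mp (lt_of_lt_of_le Nat.zero_lt_one (face_card_pos hs))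
    have v : Valid ({a}, s) := ⟨Finset.singleton_subset_iff.mpr ha, face_singleton a, hs⟩
    exact (central_diag_eq q hf v).symm.trans (sing a)
  rw [Algebra.algebraMap_eq_smul_one]
  funext p
  obtain ⟨⟨F, G⟩, hp⟩ := p
  rw [smul_apply', one_apply]
  by_cases hFG : F = G
  · subst hFG
    rw [if_pos rfl, mul_one]
    exact diag F hp.2.1
  · rw [if_neg hFG, mul_zero]
    exact central_offdiag q hf hp hFG

end AlgA
namespace TorusMap

open AlgA

variable (k : Type) [Field k] (q : k)

def vdiagF (v : TorusFace) : Valid (v.val, v.val) := ⟨le_refl _, v.prop, v.prop⟩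

def varrow (x : TorusArrow) : Valid (x.val.1.val, x.val.2.val) :=
  ⟨x.prop.1, x.val.1.prop, x.val.2.prop⟩

noncomputable def eA (v : TorusFace) : AlgA k q := bas q v.val v.val

noncomputable def aA (x : TorusArrow) : AlgA k q := bas q x.val.1.val x.val.2.val

noncomputable def genMap : TorusGen → AlgA k q := Sum.elim (eA k q) (aA k q)

noncomputable def phi0 : FreeAlgebra k TorusGen →ₐ[k] AlgA k q :=
  FreeAlgebra.lift k (genMap k q)

lemma add_apply' (f g : AlgA k q) (p : PIdx) : (f + g) p = f p + g p := rfl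

lemma sum_apply'' {ι : Type} (s : Finset ι) (f : ι → AlgA k q) (p : PIdx) :
    (∑ i ∈ s, f i) p = ∑ i ∈ s, f i p := by
  classical
  induction s using Finset.induction with
  | empty => rw [Finset.sum_empty, Finset.sum_empty, zero_apply']
  | insert _ _ hni ih =>
    rw [Finset.sum_insert hni, Finset.sum_insert hni, add_apply', ih]

lemma phi0_eGen (v : TorusFace) : phi0 k q (eGen k v) = eA k q v := by
  erw [eGen, phi0, FreeAlgebra.lift_ι_apply]; rfl

lemma phi0_aGen (x : TorusArrow) : phi0 k q (aGen k x) = aA k q x := by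
  erw [aGen, phi0, FreeAlgebra.lift_ι_apply]; rfl

lemma not_special_C {a b c : ZMod 7} (h : PosCorner a b c) :
    ¬ Special ({a} : N7) {a, c} {a, b, c} := by
  rintro ⟨a', b', c', hpc, h1, h2, h3⟩
  obtain ⟨hab, hac, hbc⟩ := posCorner_ne a b c h
  have ha : a' = a := (Finset.singleton_injective h1.symm)
  subst ha
  have hc : c ∈ ({a', b'} : N7) := by rw [← h2]; simp
  have hcb' : c = b' := by
    rcases Finset.mem_insert.mp hc with h' | h'
    · exact absurd h'.symm hac
    · exact Finset.mem_singleton.mp h'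
  subst hcb'
  have hb : b ∈ ({a', c, c'} : N7) := by rw [← h3]; simp
  have hbc' : b = c' := by
    rcases Finset.mem_insert.mp hb with h' | h'
    · exact absurd h'.symm hab
    · rcases Finset.mem_insert.mp h' with h'' | h''
      · exact absurd h'' hbc
      · exact Finset.mem_singleton.mp h''
  subst hbc'
  exact posCorner_not_swap a' b c h hpc

lemma phi0_rel : ∀ ⦃x y : FreeAlgebra k TorusGen⦄, TorusRel k q x y → phi0 k q x = phi0 k q y := by
  intro x y h
  induction h with
  | idem v =>
    rw [map_mul, phi0_eGen]
    show bas q v.val v.val * bas q v.val v.val = bas q v.val v.val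
    rw [bas_mul_bas q (vdiagF v) (vdiagF v), if_pos rfl, cc_left_one q (le_refl _), one_smul]
  | orth v w h =>
    rw [map_mul, map_zero, phi0_eGen, phi0_eGen]
    show bas q v.val v.val * bas q w.val w.val = 0
    rw [bas_mul_bas q (vdiagF v) (vdiagF w), if_neg (fun hc => h (Subtype.ext hc).symm)]
  | sum_one =>
    rw [map_sum, map_one]
    funext p
    obtain ⟨⟨F, G⟩, hp⟩ := p
    rw [one_apply]
    erw [sum_apply'']
    by_cases hFG : F = G
    · subst hFG
      rw [if_pos rfl]
      refine Eq.trans (Finset.sum_eq_single (⟨F, hp.2.1⟩ : TorusFace) ?_ ?_) ?_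
      · intro v _ hv
        erw [phi0_eGen]
        show (if ((F, F) : N7 × N7) = (v.val, v.val) then (1 : k) else 0) = 0
        rw [if_neg (fun hc => hv (Subtype.ext (congrArg Prod.fst hc).symm))]
      · intro hmem; exact absurd (Finset.mem_univ _) hmem
      · erw [phi0_eGen]
        show (if ((F, F) : N7 × N7) = (F, F) then (1 : k) else 0) = 1
        rw [if_pos rfl]
    · rw [if_neg hFG]
      refine Finset.sum_eq_zero fun v _ => ?_
      rw [phi0_eGen]
      show (if ((F, G) : N7 × N7) = (v.val, v.val) then (1 : k) else 0) = 0
      rw [if_neg (fun hc => hFG ((congrArg Prod.fst hc).trans (congrArg Prod.snd hc).symm))]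
  | supp x =>
    rw [map_mul, map_mul, phi0_eGen, phi0_eGen, phi0_aGen]
    show bas q x.val.1.val x.val.2.val
      = bas q x.val.2.val x.val.2.val * bas q x.val.1.val x.val.2.val * bas q x.val.1.val x.val.1.val
    rw [bas_mul_bas q (vdiagF x.val.2) (varrow x), if_pos rfl, cc_right_one q x.prop.1, one_smul,
      bas_mul_bas q (varrow x) (vdiagF x.val.1), if_pos rfl, cc_left_one q x.prop.1, one_smul]
  | deform a b c h =>
    have pf := posCorner_facts a b c h
    have hsubB : ({a} : N7) ⊆ {a, b} := pf.2.2.2.2.1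
    have hsubC : ({a} : N7) ⊆ {a, c} := pf.2.2.2.2.2.1
    have hsubB2 : ({a, b} : N7) ⊆ {a, b, c} := pf.2.2.2.2.2.2.1
    have hsubC2 : ({a, c} : N7) ⊆ {a, b, c} := pf.2.2.2.2.2.2.2.1
    rw [map_mul, map_smul, map_mul, phi0_aGen, phi0_aGen, phi0_aGen, phi0_aGen]
    show bas q ({a, b} : N7) {a, b, c} * bas q {a} {a, b}
      = q • (bas q ({a, c} : N7) {a, b, c} * bas q {a} {a, c})
    rw [bas_mul_bas q ⟨hsubB2, pf.2.1, pf.2.2.2.1⟩ ⟨hsubB, pf.1, pf.2.1⟩, if_pos rfl,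
      bas_mul_bas q ⟨hsubC2, pf.2.2.1, pf.2.2.2.1⟩ ⟨hsubC, pf.1, pf.2.2.1⟩, if_pos rfl]
    have hccB : cc k q ({a} : N7) {a, b} {a, b, c} = q := by
      rw [cc, if_pos ⟨hsubB, hsubB2⟩, if_pos ⟨a, b, c, h, rfl, rfl, rfl⟩]
    have hccC : cc k q ({a} : N7) {a, c} {a, b, c} = 1 := by
      rw [cc, if_pos ⟨hsubC, hsubC2⟩, if_neg (not_special_C h)]
    rw [hccB, hccC, one_smul]

noncomputable def phi : RingQuot (TorusRel k q) →ₐ[k] AlgA k q :=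
  RingQuot.liftAlgHom k ⟨phi0 k q, phi0_rel k q⟩

lemma phi_mk (x : FreeAlgebra k TorusGen) :
    phi k q (RingQuot.mkAlgHom k (TorusRel k q) x) = phi0 k q x := by
  rw [phi, RingQuot.liftAlgHom_mkAlgHom_apply]

end TorusMap
namespace TorusSpan

open AlgA TorusMap

variable (k : Type) [Field k] (q : k)

/-- Positively-oriented corners. -/
def CornerT : Type := {t : ZMod 7 × ZMod 7 × ZMod 7 // PosCorner t.1 t.2.1 t.2.2}

instance : Fintype CornerT := inferInstanceAs (Fintype {t : ZMod 7 × ZMod 7 × ZMod 7 // PosCorner t.1 t.2.1 t.2.2})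
instance : DecidableEq CornerT := inferInstanceAs (DecidableEq {t : ZMod 7 × ZMod 7 × ZMod 7 // PosCorner t.1 t.2.1 t.2.2})

def SpanIdx : Type := TorusFace ⊕ TorusArrow ⊕ CornerT

instance : Fintype TorusArrow := (inferInstance : Fintype {p : TorusFace × TorusFace //
    p.1.val ⊆ p.2.val ∧ p.2.val.card = p.1.val.card + 1})
instance : Fintype SpanIdx := inferInstanceAs (Fintype (TorusFace ⊕ TorusArrow ⊕ CornerT))
instance : DecidableEq SpanIdx := inferInstanceAs (DecidableEq (TorusFace ⊕ TorusArrow ⊕ CornerT))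

noncomputable abbrev DD := RingQuot (TorusRel k q)

noncomputable def mkD : FreeAlgebra k TorusGen →ₐ[k] DD k q := RingQuot.mkAlgHom k (TorusRel k q)

noncomputable def eD (v : TorusFace) : DD k q := mkD k q (eGen k v)

noncomputable def aD (x : TorusArrow) : DD k q := mkD k q (aGen k x)

noncomputable def cD (t : CornerT) : DD k q :=
  aD k q (betaC t.val.1 t.val.2.1 t.val.2.2 t.prop) * aD k q (alphaC t.val.1 t.val.2.1 t.val.2.2 t.prop)

lemma eD_mul_eD (v w : TorusFace) : eD k q v * eD k q w = if v = w then eD k q v else 0 := by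
  rw [eD, eD, ← map_mul]
  by_cases h : v = w
  · subst h
    rw [if_pos rfl]
    exact RingQuot.mkAlgHom_rel k (TorusRel.idem v)
  · rw [if_neg h, ← map_zero (mkD k q)]
    exact RingQuot.mkAlgHom_rel k (TorusRel.orth v w h)

lemma sum_eD : ∑ v : TorusFace, eD k q v = 1 := by
  rw [← map_one (mkD k q)]
  rw [show (∑ v : TorusFace, eD k q v) = mkD k q (∑ v : TorusFace, eGen k v) from (map_sum _ _ _).symm]
  exact RingQuot.mkAlgHom_rel k TorusRel.sum_one

lemma suppD (x : TorusArrow) : aD k q x = eD k q x.val.2 * aD k q x * eD k q x.val.1 := by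
  rw [eD, eD, aD, ← map_mul, ← map_mul]
  exact RingQuot.mkAlgHom_rel k (TorusRel.supp x)

lemma deformD (a b c : ZMod 7) (h : PosCorner a b c) :
    aD k q (betaB a b c h) * aD k q (alphaB a b c h)
      = q • (aD k q (betaC a b c h) * aD k q (alphaC a b c h)) := by
  rw [aD, aD, aD, aD, ← map_mul, ← map_mul, ← map_smul]
  exact RingQuot.mkAlgHom_rel k (TorusRel.deform a b c h)

lemma eD_mul_aD (v : TorusFace) (x : TorusArrow) :
    eD k q v * aD k q x = if v = x.val.2 then aD k q x else 0 := by
  have h0 : eD k q v * aD k q x = (eD k q v * eD k q x.val.2) * (aD k q x * eD k q x.val.1) := by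
    conv_lhs => rw [suppD k q x]
    simp only [mul_assoc]
  rw [h0, eD_mul_eD]
  by_cases h : v = x.val.2
  · rw [if_pos h, if_pos h, h, ← mul_assoc, ← suppD]
  · rw [if_neg h, if_neg h, zero_mul]

lemma aD_mul_eD (x : TorusArrow) (v : TorusFace) :
    aD k q x * eD k q v = if v = x.val.1 then aD k q x else 0 := by
  have h0 : aD k q x * eD k q v = (eD k q x.val.2 * aD k q x) * (eD k q x.val.1 * eD k q v) := by
    conv_lhs => rw [suppD k q x]
    simp only [mul_assoc]
  rw [h0, eD_mul_eD]
  by_cases h : v = x.val.1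
  · rw [if_pos h, if_pos h.symm]
    exact (suppD k q x).symm
  · rw [if_neg h, if_neg (fun hc => h hc.symm), mul_zero]

lemma aD_mul_aD_zero (x y : TorusArrow) (h : x.val.1 ≠ y.val.2) : aD k q x * aD k q y = 0 := by
  have e1 : aD k q x * eD k q x.val.1 = aD k q x := by rw [aD_mul_eD, if_pos rfl]
  calc aD k q x * aD k q y = aD k q x * (eD k q x.val.1 * aD k q y) := by
        rw [← mul_assoc, e1]
    _ = 0 := by rw [eD_mul_aD, if_neg h, mul_zero]

end TorusSpan
namespace TorusSpan

open AlgA TorusMap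

variable (k : Type) [Field k] (q : k)

noncomputable def sD : SpanIdx → DD k q := Sum.elim (eD k q) (Sum.elim (aD k q) (cD k q))

noncomputable def M : Submodule k (DD k q) := Submodule.span k (Set.range (sD k q))

lemma eD_mem (v : TorusFace) : eD k q v ∈ M k q := Submodule.subset_span ⟨Sum.inl v, rfl⟩

lemma aD_mem (x : TorusArrow) : aD k q x ∈ M k q :=
  Submodule.subset_span ⟨Sum.inr (Sum.inl x), rfl⟩

lemma cD_mem (t : CornerT) : cD k q t ∈ M k q :=
  Submodule.subset_span ⟨Sum.inr (Sum.inr t), rfl⟩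

lemma face_ne_of_card {u w : TorusFace} (h : u.val.card ≠ w.val.card) : u ≠ w :=
  fun he => h (by rw [he])

lemma mid_cases {a b c : ZMod 7} (h : PosCorner a b c) {m : N7} (ham : a ∈ m)
    (hm2 : m ⊆ ({a, b, c} : N7)) (hcard : m.card = 2) : m = {a, b} ∨ m = {a, c} := by
  obtain ⟨hab, hac, hbc⟩ := posCorner_ne a b c h
  obtain ⟨d, e, hde, rfl⟩ := Finset.card_eq_two.mp hcard
  rcases Finset.mem_insert.mp ham with rfl | hae
  · have he : e ∈ ({a, b, c} : N7) := hm2 (by simp)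
    rcases Finset.mem_insert.mp he with rfl | he'
    · exact absurd rfl hde
    rcases Finset.mem_insert.mp he' with rfl | he''
    · exact Or.inl rfl
    · rw [Finset.mem_singleton.mp he'']; exact Or.inr rfl
  · have hae' : a = e := Finset.mem_singleton.mp hae
    subst hae'
    have hd : d ∈ ({a, b, c} : N7) := hm2 (by simp)
    rcases Finset.mem_insert.mp hd with rfl | hd'
    · exact absurd rfl (Ne.symm hde)
    rcases Finset.mem_insert.mp hd' with rfl | hd''
    · exact Or.inl (Finset.pair_comm d a)
    · rw [Finset.mem_singleton.mp hd'']; exact Or.inr (Finset.pair_comm c a)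

lemma card_betaC_tgt {a b c : ZMod 7} (h : PosCorner a b c) :
    ((betaC a b c h).val.2.val).card = 3 := (posCorner_facts a b c h).2.2.2.2.2.2.2.2.2.2.2

lemma card_alphaC_src {a b c : ZMod 7} (h : PosCorner a b c) :
    ((alphaC a b c h).val.1.val).card = 1 := (posCorner_facts a b c h).2.2.2.2.2.2.2.2.1

lemma arrow_src_card_le (x : TorusArrow) : x.val.1.val.card ≤ 2 := by
  have h1 := x.prop.2
  have h2 := face_card_le x.val.2.prop
  omega

lemma arrow_tgt_card_ge (x : TorusArrow) : 2 ≤ x.val.2.val.card := by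
  have h1 := x.prop.2
  have h2 := face_card_pos x.val.1.prop
  omega

lemma aD_mul_cD (x : TorusArrow) (t : CornerT) : aD k q x * cD k q t = 0 := by
  rw [cD, ← mul_assoc, aD_mul_aD_zero, zero_mul]
  exact face_ne_of_card (by rw [card_betaC_tgt]; have := arrow_src_card_le x; omega)

lemma cD_mul_aD (t : CornerT) (x : TorusArrow) : cD k q t * aD k q x = 0 := by
  rw [cD, mul_assoc, aD_mul_aD_zero, mul_zero]
  exact face_ne_of_card (by rw [card_alphaC_src]; have := arrow_tgt_card_ge x; omega)

lemma cD_mul_cD (t u : CornerT) : cD k q t * cD k q u = 0 := by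
  rw [cD, cD, mul_assoc, ← mul_assoc (aD k q (alphaC t.val.1 t.val.2.1 t.val.2.2 t.prop)),
    aD_mul_aD_zero, zero_mul, mul_zero]
  exact face_ne_of_card (by rw [card_alphaC_src, card_betaC_tgt]; omega)

lemma aD_mul_aD_mem (x y : TorusArrow) : aD k q x * aD k q y ∈ M k q := by
  by_cases hxy : x.val.1 = y.val.2
  · have hys := face_card_pos y.val.1.prop
    have hyt := y.prop.2
    have hxt := x.prop.2
    have hle := face_card_le x.val.2.prop
    have hx1 : x.val.1.val.card = y.val.2.val.card := by rw [hxy]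
    have hc1 : y.val.1.val.card = 1 := by omega
    have hc3 : x.val.2.val.card = 3 := by omega
    have hsub : y.val.1.val ⊆ x.val.2.val := by
      refine subset_trans y.prop.1 (subset_trans ?_ x.prop.1)
      rw [← hxy]
    obtain ⟨a, b, c, hpc, hF, hG⟩ := corner_exists x.val.2.prop hc3 hc1 hsub
    have ham : a ∈ x.val.1.val := by
      rw [hxy]
      exact y.prop.1 (by rw [hF]; exact Finset.mem_singleton_self a)
    have hmc : x.val.1.val.card = 2 := by omega
    have hy2 : y.val.2.val = x.val.1.val := by rw [hxy]
    rcases mid_cases hpc ham (hG ▸ x.prop.1) hmc with hm | hm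
    · have hx : x = betaB a b c hpc := Subtype.ext (Prod.ext (Subtype.ext hm) (Subtype.ext hG))
      have hy : y = alphaB a b c hpc :=
        Subtype.ext (Prod.ext (Subtype.ext hF) (Subtype.ext (hy2.trans hm)))
      rw [hx, hy, deformD]
      exact Submodule.smul_mem _ q (cD_mem k q ⟨(a, b, c), hpc⟩)
    · have hx : x = betaC a b c hpc := Subtype.ext (Prod.ext (Subtype.ext hm) (Subtype.ext hG))
      have hy : y = alphaC a b c hpc :=
        Subtype.ext (Prod.ext (Subtype.ext hF) (Subtype.ext (hy2.trans hm)))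
      rw [hx, hy]
      exact cD_mem k q ⟨(a, b, c), hpc⟩
  · rw [aD_mul_aD_zero k q x y hxy]; exact Submodule.zero_mem _

lemma prod_mem : ∀ i j : SpanIdx, sD k q i * sD k q j ∈ M k q := by
  rintro (v | x | t) (w | y | u)
  · show eD k q v * eD k q w ∈ M k q
    rw [eD_mul_eD]; split_ifs
    exacts [eD_mem k q v, Submodule.zero_mem _]
  · show eD k q v * aD k q y ∈ M k q
    rw [eD_mul_aD]; split_ifs
    exacts [aD_mem k q y, Submodule.zero_mem _]
  · show eD k q v * cD k q u ∈ M k q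
    rw [cD, ← mul_assoc, eD_mul_aD]; split_ifs
    · exact cD_mem k q u
    · rw [zero_mul]; exact Submodule.zero_mem _
  · show aD k q x * eD k q w ∈ M k q
    rw [aD_mul_eD]; split_ifs
    exacts [aD_mem k q x, Submodule.zero_mem _]
  · exact aD_mul_aD_mem k q x y
  · show aD k q x * cD k q u ∈ M k q
    rw [aD_mul_cD]; exact Submodule.zero_mem _
  · show cD k q t * eD k q w ∈ M k q
    rw [cD, mul_assoc, aD_mul_eD]; split_ifs
    · exact cD_mem k q t
    · rw [mul_zero]; exact Submodule.zero_mem _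
  · show cD k q t * aD k q y ∈ M k q
    rw [cD_mul_aD]; exact Submodule.zero_mem _
  · show cD k q t * cD k q u ∈ M k q
    rw [cD_mul_cD]; exact Submodule.zero_mem _

lemma mul_mem_M {x y : DD k q} (hx : x ∈ M k q) (hy : y ∈ M k q) : x * y ∈ M k q := by
  refine Submodule.span_induction (p := fun x _ => x * y ∈ M k q) ?_ ?_ ?_ ?_ hx
  · rintro x' ⟨i, rfl⟩
    refine Submodule.span_induction (p := fun y _ => sD k q i * y ∈ M k q) ?_ ?_ ?_ ?_ hy
    · rintro y' ⟨j, rfl⟩; exact prod_mem k q i j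
    · show sD k q i * 0 ∈ M k q
      rw [mul_zero]; exact Submodule.zero_mem _
    · intro u v _ _ hu hv
      show sD k q i * (u + v) ∈ M k q
      rw [mul_add]; exact Submodule.add_mem _ hu hv
    · intro r u _ hu
      show sD k q i * (r • u) ∈ M k q
      rw [mul_smul_comm]; exact Submodule.smul_mem _ r hu
  · show (0 : DD k q) * y ∈ M k q
    rw [zero_mul]; exact Submodule.zero_mem _
  · intro u v _ _ hu hv
    show (u + v) * y ∈ M k q
    rw [add_mul]; exact Submodule.add_mem _ hu hv
  · intro r u _ hu
    show (r • u) * y ∈ M k q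
    rw [smul_mul_assoc]; exact Submodule.smul_mem _ r hu

lemma one_mem_M : (1 : DD k q) ∈ M k q := by
  rw [← sum_eD k q]
  exact Submodule.sum_mem _ fun v _ => eD_mem k q v

lemma span_top : M k q = ⊤ := by
  rw [eq_top_iff]
  rintro z -
  obtain ⟨w, rfl⟩ := RingQuot.mkAlgHom_surjective k (TorusRel k q) z
  induction w using FreeAlgebra.induction with
  | grade0 r =>
    rw [AlgHom.commutes, Algebra.algebraMap_eq_smul_one]
    exact Submodule.smul_mem _ r (one_mem_M k q)
  | grade1 g =>
    rcases g with v | x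
    · exact eD_mem k q v
    · exact aD_mem k q x
  | mul x y hx hy => rw [map_mul]; exact mul_mem_M k q hx hy
  | add x y hx hy => rw [map_add]; exact Submodule.add_mem _ hx hy

end TorusSpan
namespace TorusSpan

open AlgA TorusMap

variable (k : Type) [Field k] (q : k)

lemma corner_valid {a b c : ZMod 7} (h : PosCorner a b c) :
    Valid (({a} : N7), ({a, b, c} : N7)) := by
  have pf := posCorner_facts a b c h
  exact ⟨pf.2.2.2.2.1.trans pf.2.2.2.2.2.2.1, pf.1, pf.2.2.2.1⟩

noncomputable def piP : SpanIdx → PIdx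
  | .inl v => ⟨(v.val, v.val), ⟨le_refl _, v.prop, v.prop⟩⟩
  | .inr (.inl x) => ⟨(x.val.1.val, x.val.2.val), varrow x⟩
  | .inr (.inr t) => ⟨({t.val.1}, {t.val.1, t.val.2.1, t.val.2.2}), corner_valid t.prop⟩

lemma corner_unique {a b c b' c' : ZMod 7} (h : PosCorner a b c) (h' : PosCorner a b' c')
    (he : ({a, b, c} : N7) = {a, b', c'}) : b = b' ∧ c = c' := by
  obtain ⟨hab, hac, hbc⟩ := posCorner_ne a b c h
  obtain ⟨hab', hac', hbc'⟩ := posCorner_ne a b' c' h'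
  have hb' : b' ∈ ({a, b, c} : N7) := by rw [he]; simp
  have hc' : c' ∈ ({a, b, c} : N7) := by rw [he]; simp
  rcases Finset.mem_insert.mp hb' with h1 | h1
  · exact absurd h1.symm hab'
  rcases Finset.mem_insert.mp h1 with h1 | h1
  · -- b' = b
    subst h1
    rcases Finset.mem_insert.mp hc' with h2 | h2
    · exact absurd h2.symm hac'
    rcases Finset.mem_insert.mp h2 with h2 | h2
    · exact absurd h2.symm hbc'
    · exact ⟨rfl, (Finset.mem_singleton.mp h2).symm⟩
  · -- b' = c
    have h1' := Finset.mem_singleton.mp h1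
    subst h1'
    rcases Finset.mem_insert.mp hc' with h2 | h2
    · exact absurd h2.symm hac'
    rcases Finset.mem_insert.mp h2 with h2 | h2
    · -- c' = b
      subst h2
      exact (posCorner_not_swap _ _ _ h' h).elim
    · exact absurd (Finset.mem_singleton.mp h2).symm hbc'

lemma card_corner_tri {a b c : ZMod 7} (h : PosCorner a b c) : ({a, b, c} : N7).card = 3 :=
  (posCorner_facts a b c h).2.2.2.2.2.2.2.2.2.2.2

lemma piP_inj : Function.Injective (piP) := by
  rintro (v | x | t) (w | y | u) h <;>
    have h1 := congrArg (fun p : PIdx => p.val.1) h <;>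
    have h2 := congrArg (fun p : PIdx => p.val.2) h <;>
    simp only [piP] at h1 h2
  · exact congrArg Sum.inl (Subtype.ext h1)
  · exfalso
    have := y.prop.2
    rw [← h1, ← h2] at this
    omega
  · exfalso
    have h3 := card_corner_tri u.prop
    rw [← h2] at h3
    have h4 : v.val.card = 1 := by rw [h1]; exact Finset.card_singleton _
    omega
  · exfalso
    have := x.prop.2
    rw [h1, h2] at this
    omega
  · exact congrArg (Sum.inr ∘ Sum.inl) (Subtype.ext (Prod.ext (Subtype.ext h1) (Subtype.ext h2)))
  · exfalso
    have h3 := x.prop.2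
    rw [h1, h2] at h3
    rw [card_corner_tri u.prop, Finset.card_singleton] at h3
    omega
  · exfalso
    have h3 := card_corner_tri t.prop
    rw [h2] at h3
    have h4 : w.val.card = 1 := by rw [← h1]; exact Finset.card_singleton _
    omega
  · exfalso
    have h3 := y.prop.2
    rw [← h1, ← h2] at h3
    rw [card_corner_tri t.prop, Finset.card_singleton] at h3
    omega
  · have ha : t.val.1 = u.val.1 := Finset.singleton_injective h1
    have h2' : ({t.val.1, t.val.2.1, t.val.2.2} : N7) = {t.val.1, u.val.2.1, u.val.2.2} := by
      rw [h2, ha]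
    obtain ⟨hb, hc⟩ := corner_unique t.prop (ha ▸ u.prop) h2'
    refine congrArg (Sum.inr ∘ Sum.inr) (Subtype.ext ?_)
    exact Prod.ext ha (Prod.ext hb hc)

lemma piP_surj : Function.Surjective (piP) := by
  rintro ⟨⟨F, G⟩, hv⟩
  have hsub : F ⊆ G := hv.1
  have hF : IsTorusFace F := hv.2.1
  have hG : IsTorusFace G := hv.2.2
  have h1 : 1 ≤ F.card := face_card_pos hF
  have h2 : G.card ≤ 3 := face_card_le hG
  have h3 : F.card ≤ G.card := Finset.card_le_card hsub
  rcases (by omega : G.card = F.card ∨ G.card = F.card + 1 ∨ (F.card = 1 ∧ G.card = 3)) with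
    h | h | ⟨hf1, hg3⟩
  · have hFG : F = G := Finset.eq_of_subset_of_card_le hsub h.le
    subst hFG
    exact ⟨Sum.inl ⟨F, hF⟩, rfl⟩
  · exact ⟨Sum.inr (Sum.inl ⟨(⟨F, hF⟩, ⟨G, hG⟩), ⟨hsub, h⟩⟩), rfl⟩
  · obtain ⟨a, b, c, hpc, hF', hG'⟩ := corner_exists hG hg3 hf1 hsub
    exact ⟨Sum.inr (Sum.inr ⟨(a, b, c), hpc⟩), Subtype.ext (Prod.ext hF'.symm hG'.symm)⟩

lemma phi_mkD (x : FreeAlgebra k TorusGen) : phi k q (mkD k q x) = phi0 k q x :=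
  phi_mk k q x

lemma phi_sD (i : SpanIdx) :
    phi k q (sD k q i) = bas q (piP i).val.1 (piP i).val.2 := by
  rcases i with v | x | t
  · show phi k q (mkD k q (eGen k v)) = _
    rw [phi_mkD, phi0_eGen]; rfl
  · show phi k q (mkD k q (aGen k x)) = _
    rw [phi_mkD, phi0_aGen]; rfl
  · obtain ⟨⟨a, b, c⟩, hpc⟩ := t
    show phi k q (aD k q (betaC a b c hpc) * aD k q (alphaC a b c hpc)) = _
    rw [map_mul]
    show phi k q (mkD k q (aGen k (betaC a b c hpc))) * phi k q (mkD k q (aGen k (alphaC a b c hpc))) = _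
    rw [phi_mkD, phi_mkD, phi0_aGen, phi0_aGen]
    have pf := posCorner_facts a b c hpc
    show bas q ({a, c} : N7) {a, b, c} * bas q {a} {a, c} = bas q ({a} : N7) {a, b, c}
    rw [bas_mul_bas q ⟨pf.2.2.2.2.2.2.2.1, pf.2.2.1, pf.2.2.2.1⟩ ⟨pf.2.2.2.2.2.1, pf.1, pf.2.2.1⟩,
      if_pos rfl]
    have hcc : cc k q ({a} : N7) {a, c} {a, b, c} = 1 := by
      rw [cc, if_pos ⟨pf.2.2.2.2.2.1, pf.2.2.2.2.2.2.2.1⟩, if_neg (not_special_C hpc)]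
    rw [hcc, one_smul]

lemma bas_piP_eval (g : SpanIdx → k) (i0 : SpanIdx) :
    (∑ i : SpanIdx, g i • (bas q (piP i).val.1 (piP i).val.2 : AlgA k q)) (piP i0) = g i0 := by
  rw [sum_apply'' k q]
  rw [Finset.sum_eq_single i0]
  · rw [smul_apply', bas_apply, if_pos rfl, mul_one]
  · intro i _ hi
    rw [smul_apply', bas_apply, if_neg, mul_zero]
    intro hc
    exact hi (piP_inj (Subtype.ext hc)).symm
  · intro hmem; exact absurd (Finset.mem_univ _) hmem

end TorusSpan
namespace TorusSpan

open AlgA TorusMap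

variable (k : Type) [Field k] (q : k)

lemma phi_surj : Function.Surjective (phi k q) := by
  intro f
  refine ⟨∑ i : SpanIdx, f (piP i) • sD k q i, ?_⟩
  rw [map_sum]
  have h1 : ∀ i : SpanIdx, phi k q (f (piP i) • sD k q i)
      = f (piP i) • (bas q (piP i).val.1 (piP i).val.2 : AlgA k q) := by
    intro i; rw [map_smul, phi_sD]
  rw [Finset.sum_congr rfl fun i _ => h1 i]
  funext p
  obtain ⟨i0, rfl⟩ := piP_surj p
  exact bas_piP_eval k q (fun i => f (piP i)) i0

lemma phi_inj : Function.Injective (phi k q) := by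
  rw [injective_iff_map_eq_zero]
  intro z hz
  have hzM : z ∈ M k q := by rw [span_top]; trivial
  rw [M] at hzM
  obtain ⟨g, hg⟩ := (Submodule.mem_span_range_iff_exists_fun k).mp hzM
  have h2 : phi k q z = ∑ i : SpanIdx, g i • (bas q (piP i).val.1 (piP i).val.2 : AlgA k q) := by
    rw [← hg, map_sum]
    exact Finset.sum_congr rfl fun i _ => by rw [map_smul, phi_sD]
  rw [hz] at h2
  have hg0 : ∀ i0 : SpanIdx, g i0 = 0 := by
    intro i0
    have h3 := congrFun h2.symm (piP i0)
    rw [bas_piP_eval] at h3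
    exact h3.trans (zero_apply' q (piP i0))
  rw [← hg]
  exact Finset.sum_eq_zero fun i _ => by rw [hg0, zero_smul]

lemma nontrivialD : (1 : DD k q) ≠ 0 := by
  intro h
  have h1 := congrArg (phi k q) h
  rw [map_one, map_zero] at h1
  have h2 := congrFun h1 ⟨({0}, {0}), vsing 0⟩
  rw [one_apply, if_pos rfl, zero_apply'] at h2
  exact one_ne_zero h2

lemma center_eq_bot : Subalgebra.center k (DD k q) = ⊥ := by
  refine le_antisymm ?_ bot_le
  intro z hz
  have hcomm : ∀ g : DD k q, g * z = z * g := fun g => Subalgebra.mem_center_iff.mp hz g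
  have hc : ∀ g' : AlgA k q, g' * phi k q z = phi k q z * g' := by
    intro g'
    obtain ⟨w, rfl⟩ := phi_surj k q g'
    rw [← map_mul, ← map_mul, hcomm w]
  have hsc := central_eq_scalar q (phi k q z) hc
  set lam := (phi k q) z ⟨({0}, {0}), vsing 0⟩ with hlam
  have hz' : z = algebraMap k (DD k q) lam := by
    apply phi_inj k q
    rw [AlgHom.commutes]
    exact hsc
  exact Algebra.mem_bot.mpr ⟨_, hz'.symm⟩

lemma finrank_center : Module.finrank k (Subalgebra.center k (DD k q)) = 1 := by
  rw [center_eq_bot]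
  haveI : Nontrivial (DD k q) := ⟨1, 0, nontrivialD k q⟩
  rw [(Algebra.botEquiv k (DD k q)).toLinearEquiv.finrank_eq, Module.finrank_self]

end TorusSpan
end TorusCenter

set_option synthInstance.maxHeartbeats 1000000

/-- For any field `k` and any `q ∈ k`, the center of the deformed incidence
algebra `I_q(T²_s)` is trivial: it consists exactly of the scalar multiples of the identity
(i.e. it is the image of `k`, the bottom subalgebra), and is `1`-dimensional over `k`. -/
theorem center_deformed_simplicial_torus_trivial
    (k : Type) [Field k] (q : k) :
    Subalgebra.center k (DeformedTorusAlgebra k q) = ⊥ ∧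
    Module.finrank k (Subalgebra.center k (DeformedTorusAlgebra k q)) = 1 := by
  constructor
  · exact TorusCenter.TorusSpan.center_eq_bot k q
  · exact TorusCenter.TorusSpan.finrank_center k q
end

section
/- Let k be a field and Ψ ∈ sl₂(k)⊗sl₂(k). Then the deformed algebra (Λ⊗Λ)_Ψ is 16-dimensional over k (the same dimension as the undeformed algebra Λ⊗_k Λ); a basis is given by the four vertex idempotents, the eight arrows, and the four irreducible paths y_t^{(2)} x_s^{(1)} (s, t ∈ {0,1}). -/
/-! ### The deformed algebra `(Λ ⊗ Λ)_Ψ` -/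

/-- Generators presenting `(Λ⊗Λ)_Ψ`: one generator for each of the four vertices `(i, j)`,
`i, j ∈ Fin 2`, and one for each of the eight arrows.  The arrow `(false, s, j)` is
`x_s^{(j)} : (0, j) → (1, j)` and `(true, s, i)` is `y_s^{(i)} : (i, 0) → (i, 1)`,
for `s ∈ Fin 2` (columns and rows of the `2 × 2` grid are numbered `0, 1`). -/
def DGen : Type := (Fin 2 × Fin 2) ⊕ (Bool × Fin 2 × Fin 2)

variable (k : Type) [Field k]

/-- The idempotent generator attached to a vertex of the quiver. -/
noncomputable def dE (v : Fin 2 × Fin 2) : FreeAlgebra k DGen := FreeAlgebra.ι k (Sum.inl v)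

/-- The arrow `x_s^{(j)}`. -/
noncomputable def dX (s j : Fin 2) : FreeAlgebra k DGen :=
  FreeAlgebra.ι k (Sum.inr (false, s, j))

/-- The arrow `y_s^{(i)}`. -/
noncomputable def dY (s i : Fin 2) : FreeAlgebra k DGen :=
  FreeAlgebra.ι k (Sum.inr (true, s, i))

/-- The generator attached to an arrow. -/
noncomputable def dA (a : Bool × Fin 2 × Fin 2) : FreeAlgebra k DGen :=
  FreeAlgebra.ι k (Sum.inr a)

/-- The source of an arrow. -/
def dSrc : Bool × Fin 2 × Fin 2 → Fin 2 × Fin 2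
  | (false, _, j) => (0, j)
  | (true, _, i) => (i, 0)

/-- The target of an arrow. -/
def dTgt : Bool × Fin 2 × Fin 2 → Fin 2 × Fin 2
  | (false, _, j) => (1, j)
  | (true, _, i) => (i, 1)

variable (N : ℕ) (A B : Fin N → Matrix (Fin 2) (Fin 2) k)

/-- The defining relations of `(Λ⊗Λ)_Ψ` for `Ψ = Σ_m A_m ⊗ B_m`: the vertex generators are
orthogonal idempotents summing to `1`, each arrow `a : v → w` satisfies `a = e_w a e_v`, and
for all `s, t`:
`x_s^{(2)} y_t^{(1)} = y_t^{(2)} x_s^{(1)} + Σ_{u,v} (Σ_m (A_m)_{us} (B_m)_{vt}) y_v^{(2)} x_u^{(1)}`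
(the superscripts `(1), (2)` are the indices `0, 1 : Fin 2`). -/
inductive DRel : FreeAlgebra k DGen → FreeAlgebra k DGen → Prop
  | idem (v : Fin 2 × Fin 2) : DRel (dE k v * dE k v) (dE k v)
  | orth (v w : Fin 2 × Fin 2) (h : v ≠ w) : DRel (dE k v * dE k w) 0
  | sum_one : DRel (∑ v : Fin 2 × Fin 2, dE k v) 1
  | supp (a : Bool × Fin 2 × Fin 2) :
      DRel (dA k a) (dE k (dTgt a) * dA k a * dE k (dSrc a))
  | deform (s t : Fin 2) :
      DRel (dX k s 1 * dY k t 0)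
        (dY k t 1 * dX k s 0 +
          ∑ u : Fin 2, ∑ v : Fin 2, (∑ m, A m u s * B m v t) • (dY k v 1 * dX k u 0))

/-- The deformed algebra `(Λ⊗Λ)_Ψ`, for `Ψ = Σ_m A_m ⊗ B_m ∈ sl₂ ⊗ sl₂`. -/
noncomputable def DeformedKronecker : Type := RingQuot (DRel k N A B)

noncomputable instance : Ring (DeformedKronecker k N A B) :=
  inferInstanceAs (Ring (RingQuot (DRel k N A B)))

noncomputable instance : Algebra k (DeformedKronecker k N A B) :=
  inferInstanceAs (Algebra k (RingQuot (DRel k N A B)))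

/-- The claimed basis of `(Λ⊗Λ)_Ψ`: the four vertex idempotents, the eight arrows, and the
four irreducible paths `y_t^{(2)} x_s^{(1)}`. -/
noncomputable def deformedKroneckerBasisFamily (N : ℕ)
    (A B : Fin N → Matrix (Fin 2) (Fin 2) k) :
    (Fin 2 × Fin 2) ⊕ (Bool × Fin 2 × Fin 2) ⊕ (Fin 2 × Fin 2) →
      DeformedKronecker k N A B
  | Sum.inl v => RingQuot.mkAlgHom k (DRel k N A B) (dE k v)
  | Sum.inr (Sum.inl a) => RingQuot.mkAlgHom k (DRel k N A B) (dA k a)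
  | Sum.inr (Sum.inr (s, t)) => RingQuot.mkAlgHom k (DRel k N A B) (dY k t 1 * dX k s 0)

/-! ### Auxiliary material for the proof -/

abbrev DKBIdx : Type := (Fin 2 × Fin 2) ⊕ (Bool × Fin 2 × Fin 2) ⊕ (Fin 2 × Fin 2)

/-- ending vertex of a basis path -/
def DKvtx : DKBIdx → Fin 2 × Fin 2
  | .inl v => v
  | .inr (.inl a) => dTgt a
  | .inr (.inr _) => (1, 1)

theorem DK_diag_mul_sb {n R : Type*} [Fintype n] [DecidableEq n] [Semiring R]
    (d : n → R) (i j : n) (c : R) :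
    Matrix.diagonal d * Matrix.single i j c = Matrix.single i j (d i * c) := by
  ext a b
  rw [Matrix.diagonal_mul]
  by_cases h : i = a
  · subst h; simp [Matrix.single]
  · simp [Matrix.single, h]

theorem DK_sb_mul_diag {n R : Type*} [Fintype n] [DecidableEq n] [Semiring R]
    (d : n → R) (i j : n) (c : R) :
    Matrix.single i j c * Matrix.diagonal d = Matrix.single i j (c * d j) := by
  ext a b
  rw [Matrix.mul_diagonal]
  by_cases h : j = b
  · subst h; simp [Matrix.single]
  · simp [Matrix.single, h]

theorem DK_sb_mul_sb {n R : Type*} [Fintype n] [DecidableEq n] [Semiring R]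
    (i j i' j' : n) (c d : R) :
    Matrix.single i j c * Matrix.single i' j' d =
      if j = i' then Matrix.single i j' (c * d) else 0 := by
  split
  · next h => subst h; simp
  · next h => exact Matrix.single_mul_single_of_ne (h := h) ..

theorem DK_sb_ite {n R : Type*} [DecidableEq n] [Zero R] (P : Prop) [Decidable P]
    (i j : n) (c : R) :
    Matrix.single i j (if P then c else 0) = if P then Matrix.single i j c else 0 := by
  split <;> simp

variable (k : Type) [Field k] (N : ℕ) (A B : Fin N → Matrix (Fin 2) (Fin 2) k)

def DKcc (u v s t : Fin 2) : k := ∑ m, A m u s * B m v t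

def DKE (v : Fin 2 × Fin 2) : Matrix DKBIdx DKBIdx k :=
  Matrix.diagonal fun b => if DKvtx b = v then 1 else 0

def DKA (a : Bool × Fin 2 × Fin 2) : Matrix DKBIdx DKBIdx k :=
  Matrix.single (.inr (.inl a)) (.inl (dSrc a)) 1 +
  if a.1 then
    (if a.2.2 = 1 then
      ∑ s : Fin 2,
        Matrix.single (.inr (.inr (s, a.2.1))) (.inr (.inl (false, s, 0))) (1 : k)
    else 0)
  else
    (if a.2.2 = 1 then
      ∑ t : Fin 2, ∑ u : Fin 2, ∑ v : Fin 2,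
        Matrix.single (.inr (.inr (u, v))) (.inr (.inl (true, t, 0)))
          ((if u = a.2.1 ∧ v = t then 1 else 0) + DKcc k N A B u v a.2.1 t)
    else 0)

theorem DKE_mul_DKE (v w : Fin 2 × Fin 2) :
    DKE k v * DKE k w = if v = w then DKE k v else 0 := by
  ext a b
  rw [DKE, DKE, Matrix.diagonal_mul_diagonal]
  by_cases hvw : v = w
  · subst hvw
    by_cases hv : DKvtx a = v <;> simp [Matrix.diagonal_apply, hv]
  · by_cases hv : DKvtx a = v <;> simp [Matrix.diagonal_apply, hv, hvw]

theorem DKE_sum : ∑ v : Fin 2 × Fin 2, DKE k v = 1 := by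
  ext a b
  simp only [DKE, Matrix.sum_apply, Matrix.diagonal_apply, Matrix.one_apply]
  by_cases h : a = b
  · subst h; simp
  · simp [h]

theorem DKA_supp (a : Bool × Fin 2 × Fin 2) :
    DKA k N A B a = DKE k (dTgt a) * DKA k N A B a * DKE k (dSrc a) := by
  fin_cases a <;>
    simp [DKA, DKE, dSrc, dTgt, DKvtx, Fin.sum_univ_two, mul_add, add_mul,
      DK_diag_mul_sb, DK_sb_mul_diag]

theorem DK_yx (s t : Fin 2) :
    DKA k N A B (true, t, 1) * DKA k N A B (false, s, 0) =
      Matrix.single (.inr (.inr (s, t))) (.inl (0, 0)) 1 := by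
  fin_cases s <;> fin_cases t <;> simp (config := { decide := true }) [DKA, dSrc, add_mul, Finset.sum_mul, DK_sb_mul_sb, DK_sb_ite,
    Sum.inr.injEq, Sum.inl.injEq, Prod.mk.injEq, Finset.sum_ite_eq, Finset.sum_ite_eq']

theorem DK_xy (s t : Fin 2) :
    DKA k N A B (false, s, 1) * DKA k N A B (true, t, 0) =
      ∑ u : Fin 2, ∑ v : Fin 2,
        Matrix.single (.inr (.inr (u, v))) (.inl (0, 0))
          ((if u = s ∧ v = t then 1 else 0) + DKcc k N A B u v s t) := by
  fin_cases s <;> fin_cases t <;> simp (config := { decide := true }) [DKA, dSrc, add_mul, Finset.sum_mul, DK_sb_mul_sb, DK_sb_ite,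
    Sum.inr.injEq, Sum.inl.injEq, Prod.mk.injEq, Finset.sum_ite_eq, Finset.sum_ite_eq']

theorem DK_deform (s t : Fin 2) :
    DKA k N A B (false, s, 1) * DKA k N A B (true, t, 0) =
      DKA k N A B (true, t, 1) * DKA k N A B (false, s, 0) +
      ∑ u : Fin 2, ∑ v : Fin 2, DKcc k N A B u v s t •
        (DKA k N A B (true, v, 1) * DKA k N A B (false, u, 0)) := by
  rw [DK_xy]
  simp only [DK_yx, Matrix.smul_single, smul_eq_mul, mul_one]
  fin_cases s <;> fin_cases t <;>
    · simp (config := { decide := true }) [Matrix.single_add]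
      abel


-- the representation

noncomputable def DKrep : DGen → Matrix DKBIdx DKBIdx k :=
  Sum.elim (DKE k) (DKA k N A B)

noncomputable def DKΦ : FreeAlgebra k DGen →ₐ[k] Matrix DKBIdx DKBIdx k :=
  FreeAlgebra.lift k (DKrep k N A B)

@[simp] theorem DKΦ_dE (v) : DKΦ k N A B (dE k v) = DKE k v := by
  rw [DKΦ, dE, DKrep]; exact FreeAlgebra.lift_ι_apply _ _

@[simp] theorem DKΦ_dA (a) : DKΦ k N A B (dA k a) = DKA k N A B a := by
  rw [DKΦ, dA, DKrep]; exact FreeAlgebra.lift_ι_apply _ _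

theorem DKΦ_rel : ∀ ⦃x y⦄, DRel k N A B x y → DKΦ k N A B x = DKΦ k N A B y := by
  intro x y h
  induction h with
  | idem v => rw [map_mul, DKΦ_dE, DKE_mul_DKE, if_pos rfl]
  | orth v w h => rw [map_mul, DKΦ_dE, DKΦ_dE, DKE_mul_DKE, if_neg h, map_zero]
  | sum_one => rw [map_sum, map_one]; simp only [DKΦ_dE]; exact DKE_sum k
  | supp a => simp only [map_mul, DKΦ_dE, DKΦ_dA]; exact DKA_supp k N A B a
  | deform s t =>
      simp only [map_mul, map_add, map_sum, map_smul, DKΦ_dA]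
      have hx : ∀ s j, DKΦ k N A B (dX k s j) = DKA k N A B (false, s, j) := fun s j => by
        rw [DKΦ, dX, DKrep]; exact FreeAlgebra.lift_ι_apply _ _
      have hy : ∀ s i, DKΦ k N A B (dY k s i) = DKA k N A B (true, s, i) := fun s i => by
        rw [DKΦ, dY, DKrep]; exact FreeAlgebra.lift_ι_apply _ _
      simp only [hx, hy]
      exact DK_deform k N A B s t

noncomputable def DKψ : RingQuot (DRel k N A B) →ₐ[k] Matrix DKBIdx DKBIdx k :=
  RingQuot.liftAlgHom k ⟨DKΦ k N A B, DKΦ_rel k N A B⟩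

noncomputable def DKL : Matrix DKBIdx DKBIdx k →ₗ[k] (DKBIdx → k) where
  toFun X := fun b => ∑ v : Fin 2 × Fin 2, X b (Sum.inl v)
  map_add' X Y := by funext b; simp [Finset.sum_add_distrib]
  map_smul' c X := by funext b; simp [Finset.mul_sum]

theorem DKL_sb_inl (i : DKBIdx) (u : Fin 2 × Fin 2) (c : k) :
    DKL k (Matrix.single i (Sum.inl u) c) = Pi.single i c := by
  funext b
  simp only [DKL, LinearMap.coe_mk, AddHom.coe_mk]
  by_cases h : i = b
  · subst h
    simp [Matrix.single, Pi.single_apply, Finset.sum_ite_eq, Sum.inl.injEq]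
  · simp [Matrix.single, Pi.single_apply, h, Ne.symm h]

theorem DKL_sb_inr (i : DKBIdx) (z : (Bool × Fin 2 × Fin 2) ⊕ (Fin 2 × Fin 2)) (c : k) :
    DKL k (Matrix.single i (Sum.inr z) c) = 0 := by
  funext b
  simp [DKL, Matrix.single]

theorem DKL_DKE (v : Fin 2 × Fin 2) :
    DKL k (DKE k v) = Pi.single (Sum.inl v : DKBIdx) 1 := by
  funext b
  simp only [DKL, DKE, LinearMap.coe_mk, AddHom.coe_mk, Matrix.diagonal_apply]
  rcases b with w | z
  · by_cases h : w = v
    · subst h; simp [Pi.single_apply, DKvtx]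
    · simp [Pi.single_apply, h, DKvtx]
  · simp [Pi.single_apply]

theorem DKL_DKA (a : Bool × Fin 2 × Fin 2) :
    DKL k (DKA k N A B a) = Pi.single (Sum.inr (Sum.inl a) : DKBIdx) 1 := by
  rw [DKA, map_add, DKL_sb_inl]
  rcases a with ⟨d, s, j⟩
  cases d <;>
    · by_cases h : j = 1 <;>
        simp [h, map_sum, DKL_sb_inr]

theorem DK_indep : LinearIndependent k (deformedKroneckerBasisFamily k N A B) := by
  have comp :
      (DKL k ∘ₗ (DKψ k N A B).toLinearMap) ∘ deformedKroneckerBasisFamily k N A B =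
        fun i => Pi.single i (1 : k) := by
    funext i
    rcases i with v | a | ⟨s, t⟩ <;>
      simp only [Function.comp_apply, deformedKroneckerBasisFamily, LinearMap.coe_comp,
        AlgHom.toLinearMap_apply, DKψ, RingQuot.liftAlgHom_mkAlgHom_apply]
    · change DKL k (DKψ k N A B (RingQuot.mkAlgHom k (DRel k N A B) (dE k v))) = _
      rw [DKψ, RingQuot.liftAlgHom_mkAlgHom_apply]
      rw [DKΦ_dE, DKL_DKE]
    · change DKL k (DKψ k N A B (RingQuot.mkAlgHom k (DRel k N A B) (dA k a))) = _
      rw [DKψ, RingQuot.liftAlgHom_mkAlgHom_apply]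
      rw [DKΦ_dA, DKL_DKA]
    · change DKL k (DKψ k N A B (RingQuot.mkAlgHom k (DRel k N A B) (dY k t 1 * dX k s 0))) = _
      rw [DKψ, RingQuot.liftAlgHom_mkAlgHom_apply]
      rw [map_mul]
      have hx : DKΦ k N A B (dX k s 0) = DKA k N A B (false, s, 0) := by
        rw [DKΦ, dX, DKrep]; exact FreeAlgebra.lift_ι_apply _ _
      have hy : DKΦ k N A B (dY k t 1) = DKA k N A B (true, t, 1) := by
        rw [DKΦ, dY, DKrep]; exact FreeAlgebra.lift_ι_apply _ _
      rw [hx, hy, DK_yx, DKL_sb_inl]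
  have : LinearIndependent k
      ((DKL k ∘ₗ (DKψ k N A B).toLinearMap) ∘ deformedKroneckerBasisFamily k N A B) := by
    rw [comp, show (fun i => Pi.single i (1 : k)) = ⇑(Pi.basisFun k DKBIdx) from
      funext fun i => by simp [Pi.basisFun_apply]]
    exact (Pi.basisFun k DKBIdx).linearIndependent
  exact this.of_comp _


theorem DK_span : Submodule.span k (Set.range (deformedKroneckerBasisFamily k N A B)) = ⊤ := by
  set f := RingQuot.mkAlgHom k (DRel k N A B) with hf
  set S := Submodule.span k (Set.range (deformedKroneckerBasisFamily k N A B)) with hS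
  have hEE : ∀ v w, f (dE k v) * f (dE k w) = if v = w then f (dE k v) else 0 := by
    intro v w
    rw [← map_mul]
    by_cases h : v = w
    · subst h; rw [if_pos rfl]; exact RingQuot.mkAlgHom_rel k (DRel.idem v)
    · rw [if_neg h, RingQuot.mkAlgHom_rel k (DRel.orth v w h), map_zero]
  have hsupp : ∀ a, f (dA k a) = f (dE k (dTgt a)) * f (dA k a) * f (dE k (dSrc a)) := by
    intro a
    rw [← map_mul, ← map_mul]
    exact RingQuot.mkAlgHom_rel k (DRel.supp a)
  have hEA : ∀ w a, f (dE k w) * f (dA k a) = if w = dTgt a then f (dA k a) else 0 := by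
    intro w a
    by_cases h : w = dTgt a
    · rw [if_pos h, h]
      conv_lhs => rw [hsupp a]
      rw [← mul_assoc, ← mul_assoc, hEE, if_pos rfl, ← hsupp a]
    · rw [if_neg h]
      conv_lhs => rw [hsupp a]
      rw [← mul_assoc, ← mul_assoc, hEE, if_neg h, zero_mul, zero_mul]
  have hAE : ∀ a v, f (dA k a) * f (dE k v) = if v = dSrc a then f (dA k a) else 0 := by
    intro a v
    by_cases h : v = dSrc a
    · rw [if_pos h, h]
      conv_lhs => rw [hsupp a]
      rw [mul_assoc, hEE, if_pos rfl, ← hsupp a]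
    · rw [if_neg h]
      conv_lhs => rw [hsupp a]
      rw [mul_assoc, hEE, if_neg (fun e => h e.symm), mul_zero]
  have hAA0 : ∀ a a', dSrc a ≠ dTgt a' → f (dA k a) * f (dA k a') = 0 := by
    intro a a' h
    conv_lhs => rw [hsupp a']
    rw [← mul_assoc, ← mul_assoc, hAE, if_neg (Ne.symm h), zero_mul, zero_mul]
  have hP : ∀ s t, f (dY k t 1 * dX k s 0) = f (dA k (true, t, 1)) * f (dA k (false, s, 0)) :=
    fun s t => map_mul f _ _
  have memE : ∀ v, f (dE k v) ∈ S := fun v => Submodule.subset_span ⟨Sum.inl v, rfl⟩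
  have memA : ∀ a, f (dA k a) ∈ S := fun a => Submodule.subset_span ⟨Sum.inr (Sum.inl a), rfl⟩
  have memP : ∀ s t, f (dY k t 1 * dX k s 0) ∈ S := fun s t =>
    Submodule.subset_span ⟨Sum.inr (Sum.inr (s, t)), rfl⟩
  have hdeform : ∀ s t, f (dA k (false, s, 1)) * f (dA k (true, t, 0)) =
      f (dY k t 1 * dX k s 0) +
        ∑ u : Fin 2, ∑ v : Fin 2, (∑ m, A m u s * B m v t) • f (dY k v 1 * dX k u 0) := by
    intro s t
    have h := RingQuot.mkAlgHom_rel k (s := DRel k N A B) (DRel.deform s t)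
    rw [map_mul] at h
    calc f (dA k (false, s, 1)) * f (dA k (true, t, 0))
        = f (dX k s 1) * f (dY k t 0) := rfl
      _ = f (dY k t 1 * dX k s 0 +
            ∑ u : Fin 2, ∑ v : Fin 2, (∑ m, A m u s * B m v t) • (dY k v 1 * dX k u 0)) := h
      _ = _ := by
          rw [map_add, map_sum]
          congr 1
          refine Finset.sum_congr rfl fun u _ => ?_
          rw [map_sum]
          exact Finset.sum_congr rfl fun v _ => map_smul f _ _
  -- products of arrows with the length-2 paths vanish
  have hsrc_ne : ∀ a : Bool × Fin 2 × Fin 2, dSrc a ≠ (1, 1) := by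
    rintro ⟨_ | _, s, j⟩ <;> simp [dSrc, Prod.ext_iff]
  have htgt_ne : ∀ a : Bool × Fin 2 × Fin 2, dTgt a ≠ (0, 0) := by
    rintro ⟨_ | _, s, j⟩ <;> simp [dTgt, Prod.ext_iff]
  have hAP : ∀ a s t, f (dA k a) * f (dY k t 1 * dX k s 0) = 0 := by
    intro a s t
    rw [hP, ← mul_assoc, hAA0 a (true, t, 1) (hsrc_ne a), zero_mul]
  have hPA : ∀ s t a, f (dY k t 1 * dX k s 0) * f (dA k a) = 0 := by
    intro s t a
    rw [hP, mul_assoc, hAA0 (false, s, 0) a (Ne.symm (htgt_ne a)), mul_zero]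
  have hPP : ∀ s t s' t',
      f (dY k t 1 * dX k s 0) * f (dY k t' 1 * dX k s' 0) = 0 := by
    intro s t s' t'
    rw [hP, hP, mul_assoc, ← mul_assoc (f (dA k (false, s, 0))),
      hAA0 (false, s, 0) (true, t', 1) (hsrc_ne (false, s, 0)), zero_mul, mul_zero]
  have hEP : ∀ w s t, f (dE k w) * f (dY k t 1 * dX k s 0) =
      if w = (1, 1) then f (dY k t 1 * dX k s 0) else 0 := by
    intro w s t
    rw [hP, ← mul_assoc, hEA]
    by_cases h : w = (1, 1) <;> simp [h, dTgt, ← hP]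
  have hPE : ∀ s t w, f (dY k t 1 * dX k s 0) * f (dE k w) =
      if w = (0, 0) then f (dY k t 1 * dX k s 0) else 0 := by
    intro s t w
    rw [hP, mul_assoc, hAE]
    by_cases h : w = (0, 0) <;> simp [h, dSrc, ← hP]
  have key : ∀ i j, deformedKroneckerBasisFamily k N A B i *
      deformedKroneckerBasisFamily k N A B j ∈ S := by
    intro i j
    rcases i with v | a | ⟨s, t⟩ <;> rcases j with w | a' | ⟨s', t'⟩
    · show f (dE k v) * f (dE k w) ∈ S
      rw [hEE]; split
      · exact memE v
      · exact S.zero_mem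
    · show f (dE k v) * f (dA k a') ∈ S
      rw [hEA]; split
      · exact memA a'
      · exact S.zero_mem
    · show f (dE k v) * f (dY k t' 1 * dX k s' 0) ∈ S
      rw [hEP]; split
      · exact memP s' t'
      · exact S.zero_mem
    · show f (dA k a) * f (dE k w) ∈ S
      rw [hAE]; split
      · exact memA a
      · exact S.zero_mem
    · show f (dA k a) * f (dA k a') ∈ S
      have h2 : ∀ x : Fin 2, x = 0 ∨ x = 1 := by decide
      have hzero : ∀ a a' : Bool × Fin 2 × Fin 2, dSrc a ≠ dTgt a' →
          f (dA k a) * f (dA k a') ∈ S := fun a a' h => by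
        rw [hAA0 a a' h]; exact S.zero_mem
      rcases a with ⟨d, s1, j1⟩; rcases a' with ⟨d', s2, j2⟩
      cases d <;> cases d' <;> rcases h2 j1 with rfl | rfl <;> rcases h2 j2 with rfl | rfl
      · exact hzero _ _ (by intro hh; simp [dSrc, dTgt, Prod.ext_iff] at hh)
      · exact hzero _ _ (by intro hh; simp [dSrc, dTgt, Prod.ext_iff] at hh)
      · exact hzero _ _ (by intro hh; simp [dSrc, dTgt, Prod.ext_iff] at hh)
      · exact hzero _ _ (by intro hh; simp [dSrc, dTgt, Prod.ext_iff] at hh)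
      · exact hzero _ _ (by intro hh; simp [dSrc, dTgt, Prod.ext_iff] at hh)
      · exact hzero _ _ (by intro hh; simp [dSrc, dTgt, Prod.ext_iff] at hh)
      · -- x^{(1)} * y^{(0)} : use the deformation relation
        rw [hdeform]
        exact S.add_mem (memP _ _)
          (Submodule.sum_mem _ fun u _ => Submodule.sum_mem _ fun v _ =>
            Submodule.smul_mem _ _ (memP _ _))
      · exact hzero _ _ (by intro hh; simp [dSrc, dTgt, Prod.ext_iff] at hh)
      · exact hzero _ _ (by intro hh; simp [dSrc, dTgt, Prod.ext_iff] at hh)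
      · exact hzero _ _ (by intro hh; simp [dSrc, dTgt, Prod.ext_iff] at hh)
      · -- y^{(1)} * x^{(0)}
        rw [← hP]
        exact memP _ _
      · exact hzero _ _ (by intro hh; simp [dSrc, dTgt, Prod.ext_iff] at hh)
      · exact hzero _ _ (by intro hh; simp [dSrc, dTgt, Prod.ext_iff] at hh)
      · exact hzero _ _ (by intro hh; simp [dSrc, dTgt, Prod.ext_iff] at hh)
      · exact hzero _ _ (by intro hh; simp [dSrc, dTgt, Prod.ext_iff] at hh)
      · exact hzero _ _ (by intro hh; simp [dSrc, dTgt, Prod.ext_iff] at hh)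
    · show f (dA k a) * f (dY k t' 1 * dX k s' 0) ∈ S
      rw [hAP]; exact S.zero_mem
    · show f (dY k t 1 * dX k s 0) * f (dE k w) ∈ S
      rw [hPE]; split
      · exact memP s t
      · exact S.zero_mem
    · show f (dY k t 1 * dX k s 0) * f (dA k a') ∈ S
      rw [hPA]; exact S.zero_mem
    · show f (dY k t 1 * dX k s 0) * f (dY k t' 1 * dX k s' 0) ∈ S
      rw [hPP]; exact S.zero_mem
  have h1 : (1 : DeformedKronecker k N A B) ∈ S := by
    have h := RingQuot.mkAlgHom_rel k (s := DRel k N A B) DRel.sum_one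
    rw [map_sum, map_one] at h
    change (1 : RingQuot (DRel k N A B)) ∈ S
    rw [← h]
    exact Submodule.sum_mem _ fun v _ => memE v
  have hmulS : ∀ x y, x ∈ S → y ∈ S → x * y ∈ S := by
    intro x y hx hy
    refine Submodule.span_induction₂ (p := fun a b _ _ => a * b ∈ S) ?_ ?_ ?_ ?_ ?_ ?_ ?_ hx hy
    · rintro a b ⟨i, rfl⟩ ⟨j, rfl⟩; exact key i j
    · intro y hy; rw [zero_mul]; exact S.zero_mem
    · intro x hx; rw [mul_zero]; exact S.zero_mem
    · intro x y z hx hy hz ha hb; rw [add_mul]; exact S.add_mem ha hb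
    · intro x y z hx hy hz ha hb; rw [mul_add]; exact S.add_mem ha hb
    · intro r x y hx hy hxy; rw [smul_mul_assoc]; exact S.smul_mem r hxy
    · intro r x y hx hy hxy; rw [mul_smul_comm]; exact S.smul_mem r hxy
  rw [eq_top_iff]
  rintro z -
  obtain ⟨x, rfl⟩ := RingQuot.mkAlgHom_surjective k (DRel k N A B) z
  induction x using FreeAlgebra.induction with
  | grade0 r =>
      rw [AlgHom.commutes, Algebra.algebraMap_eq_smul_one]
      exact S.smul_mem r h1
  | grade1 g =>
      rcases g with v | a
      · exact memE v
      · exact memA a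
  | mul a b ha hb => rw [map_mul]; exact hmulS _ _ ha hb
  | add a b ha hb => rw [map_add]; exact S.add_mem ha hb


/-- For any field `k` and any `Ψ = Σ_m A_m ⊗ B_m ∈ sl₂ ⊗ sl₂`, the deformed
algebra `(Λ⊗Λ)_Ψ` is `16`-dimensional over `k`, with basis given by the four vertex
idempotents, the eight arrows, and the four irreducible paths `y_t^{(2)} x_s^{(1)}`. -/
theorem deformedKronecker_dimension_sixteen
    (k : Type) [Field k] (N : ℕ) (A B : Fin N → Matrix (Fin 2) (Fin 2) k)
    (hA : ∀ m, (A m).trace = 0) (hB : ∀ m, (B m).trace = 0) :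
    Module.finrank k (DeformedKronecker k N A B) = 16 ∧
    LinearIndependent k (deformedKroneckerBasisFamily k N A B) ∧
    Submodule.span k (Set.range (deformedKroneckerBasisFamily k N A B)) = ⊤ := by
  refine ⟨?_, DK_indep k N A B, DK_span k N A B⟩
  have b : Module.Basis DKBIdx k (DeformedKronecker k N A B) :=
    Module.Basis.mk (DK_indep k N A B) (DK_span k N A B).ge
  rw [Module.finrank_eq_card_basis b]
  rfl
end

section
/- Let k be a field of characteristic zero. Let A_1,…,A_N and B_1,…,B_N be traceless 2×2 matrices over k, and set K = Σ_m A_m ⊗ B_m ∈ M₄(k) (sum of Kronecker products). Let c ∈ k and let u₁, u₂, v₁, v₂ be traceless 2×2 matrices over k. Then the equation (I₄ + K)·((u₂ − v₂)⊗I₂ + I₂⊗(u₁ + v₁)) = ((u₂ + v₂)⊗I₂ + I₂⊗(c·I₂ + u₁ − v₁))·(I₄ + K) in M₄(k) (all ⊗ denoting Kronecker products) holds if and only if the following four conditions hold: (1) c = 0; (2) (u₂⊗I₂ + I₂⊗u₁)·K = K·(u₂⊗I₂ + I₂⊗u₁); (3) Σ_m tr(A_m v₂)·B_m = 2v₁;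 (4) Σ_m tr(B_m v₁)·A_m = 2v₂. -/
open Kronecker

variable {k : Type} [Field k]

private lemma kron_sub_left (X Y : Matrix (Fin 2) (Fin 2) k) (B : Matrix (Fin 2) (Fin 2) k) :
    (X - Y) ⊗ₖ B = X ⊗ₖ B - Y ⊗ₖ B := by
  ext ⟨i, p⟩ ⟨j, q⟩
  simp [Matrix.kroneckerMap_apply, sub_mul]

private lemma kron_sub_right (A : Matrix (Fin 2) (Fin 2) k) (X Y : Matrix (Fin 2) (Fin 2) k) :
    A ⊗ₖ (X - Y) = A ⊗ₖ X - A ⊗ₖ Y := by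
  ext ⟨i, p⟩ ⟨j, q⟩
  simp [Matrix.kroneckerMap_apply, mul_sub]

private lemma anticomm2 (X Y : Matrix (Fin 2) (Fin 2) k)
    (hX : X.trace = 0) (hY : Y.trace = 0) :
    X * Y + Y * X = (X * Y).trace • (1 : Matrix (Fin 2) (Fin 2) k) := by
  rw [Matrix.trace_fin_two] at hX hY
  have hX' : X 1 1 = -X 0 0 := by linear_combination hX
  have hY' : Y 1 1 = -Y 0 0 := by linear_combination hY
  ext i j
  fin_cases i <;> fin_cases j <;>
    simp [Matrix.mul_apply, Fin.sum_univ_two, Matrix.trace_fin_two, Matrix.one_apply,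
      hX', hY'] <;> ring

/-- Partial trace over the second tensor factor. -/
private def ptr2 (k : Type) [Field k] :
    Matrix (Fin 2 × Fin 2) (Fin 2 × Fin 2) k →ₗ[k] Matrix (Fin 2) (Fin 2) k where
  toFun M := Matrix.of fun i j => ∑ p, M (i, p) (j, p)
  map_add' M N := by ext i j; simp [Finset.sum_add_distrib]
  map_smul' r M := by ext i j; simp [Finset.mul_sum, Fin.sum_univ_two]; ring

/-- Partial trace over the first tensor factor. -/
private def ptr1 (k : Type) [Field k] :
    Matrix (Fin 2 × Fin 2) (Fin 2 × Fin 2) k →ₗ[k] Matrix (Fin 2) (Fin 2) k where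
  toFun M := Matrix.of fun i j => ∑ p, M (p, i) (p, j)
  map_add' M N := by ext i j; simp [Finset.sum_add_distrib]
  map_smul' r M := by ext i j; simp [Finset.mul_sum, Fin.sum_univ_two]; ring

private lemma ptr2_kron (A B : Matrix (Fin 2) (Fin 2) k) :
    ptr2 k (A ⊗ₖ B) = B.trace • A := by
  ext i j
  simp [ptr2, Matrix.trace, Matrix.diag, Fin.sum_univ_two]; ring

private lemma ptr1_kron (A B : Matrix (Fin 2) (Fin 2) k) :
    ptr1 k (A ⊗ₖ B) = A.trace • B := by
  ext i j
  simp [ptr1, Matrix.trace, Matrix.diag, Fin.sum_univ_two]; ring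

private lemma ptr2_one : ptr2 k (1 : Matrix (Fin 2 × Fin 2) (Fin 2 × Fin 2) k)
    = (2 : k) • 1 := by
  rw [← Matrix.one_kronecker_one, ptr2_kron, Matrix.trace_one]
  norm_num

private lemma ptr1_one : ptr1 k (1 : Matrix (Fin 2 × Fin 2) (Fin 2 × Fin 2) k)
    = (2 : k) • 1 := by
  rw [← Matrix.one_kronecker_one, ptr1_kron, Matrix.trace_one]
  norm_num

private lemma kron_sum_right {N : ℕ} (A : Matrix (Fin 2) (Fin 2) k)
    (f : Fin N → Matrix (Fin 2) (Fin 2) k) :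
    A ⊗ₖ (∑ m, f m) = ∑ m, A ⊗ₖ f m := by
  ext ⟨i, p⟩ ⟨j, q⟩
  simp [Matrix.kroneckerMap_apply, Finset.mul_sum, Matrix.sum_apply]

private lemma kron_sum_left {N : ℕ} (f : Fin N → Matrix (Fin 2) (Fin 2) k)
    (B : Matrix (Fin 2) (Fin 2) k) :
    (∑ m, f m) ⊗ₖ B = ∑ m, f m ⊗ₖ B := by
  ext ⟨i, p⟩ ⟨j, q⟩
  simp [Matrix.kroneckerMap_apply, Finset.sum_mul, Matrix.sum_apply]


/-- Let `k` be a field of characteristic zero, let `A_m, B_m` be traceless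
`2 × 2` matrices over `k`, and `K = Σ_m A_m ⊗ B_m` (Kronecker products).  For `c ∈ k` and
traceless `2 × 2` matrices `u₁, u₂, v₁, v₂`, the equation
`(I₄ + K)((u₂ − v₂) ⊗ I₂ + I₂ ⊗ (u₁ + v₁)) = ((u₂ + v₂) ⊗ I₂ + I₂ ⊗ (c I₂ + u₁ − v₁))(I₄ + K)`
holds iff `c = 0`, `(u₂ ⊗ I₂ + I₂ ⊗ u₁)` commutes with `K`, `Σ_m tr(A_m v₂) B_m = 2 v₁`,
and `Σ_m tr(B_m v₁) A_m = 2 v₂`. -/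
theorem kernel_characterization_deformed_kronecker
    (k : Type) [Field k] [CharZero k] (N : ℕ) (A B : Fin N → Matrix (Fin 2) (Fin 2) k)
    (hA : ∀ m, (A m).trace = 0) (hB : ∀ m, (B m).trace = 0)
    (c : k) (u₁ u₂ v₁ v₂ : Matrix (Fin 2) (Fin 2) k)
    (hu₁ : u₁.trace = 0) (hu₂ : u₂.trace = 0) (hv₁ : v₁.trace = 0) (hv₂ : v₂.trace = 0) :
    ((1 : Matrix (Fin 2 × Fin 2) (Fin 2 × Fin 2) k) + ∑ m, A m ⊗ₖ B m) *
        ((u₂ - v₂) ⊗ₖ (1 : Matrix (Fin 2) (Fin 2) k) +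
          (1 : Matrix (Fin 2) (Fin 2) k) ⊗ₖ (u₁ + v₁)) =
      ((u₂ + v₂) ⊗ₖ (1 : Matrix (Fin 2) (Fin 2) k) +
          (1 : Matrix (Fin 2) (Fin 2) k) ⊗ₖ
            (c • (1 : Matrix (Fin 2) (Fin 2) k) + u₁ - v₁)) *
        ((1 : Matrix (Fin 2 × Fin 2) (Fin 2 × Fin 2) k) + ∑ m, A m ⊗ₖ B m) ↔
      c = 0 ∧
      (u₂ ⊗ₖ (1 : Matrix (Fin 2) (Fin 2) k) + (1 : Matrix (Fin 2) (Fin 2) k) ⊗ₖ u₁) *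
          (∑ m, A m ⊗ₖ B m) =
        (∑ m, A m ⊗ₖ B m) *
          (u₂ ⊗ₖ (1 : Matrix (Fin 2) (Fin 2) k) + (1 : Matrix (Fin 2) (Fin 2) k) ⊗ₖ u₁) ∧
      ∑ m, (A m * v₂).trace • B m = (2 : k) • v₁ ∧
      ∑ m, (B m * v₁).trace • A m = (2 : k) • v₂ := by
  set K : Matrix (Fin 2 × Fin 2) (Fin 2 × Fin 2) k := ∑ m, A m ⊗ₖ B m with hK
  set U : Matrix (Fin 2 × Fin 2) (Fin 2 × Fin 2) k :=
    u₂ ⊗ₖ (1 : Matrix (Fin 2) (Fin 2) k) + (1 : Matrix (Fin 2) (Fin 2) k) ⊗ₖ u₁ with hU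
  set sA : Matrix (Fin 2) (Fin 2) k := ∑ m, (B m * v₁).trace • A m with hsA
  set sB : Matrix (Fin 2) (Fin 2) k := ∑ m, (A m * v₂).trace • B m with hsB
  -- trace facts
  have htK : K.trace = 0 := by
    rw [hK, Matrix.trace_sum]
    simp [Matrix.trace_kronecker, hA]
  have htsA : sA.trace = 0 := by
    rw [hsA, Matrix.trace_sum]
    simp [Matrix.trace_smul, hA]
  have htsB : sB.trace = 0 := by
    rw [hsB, Matrix.trace_sum]
    simp [Matrix.trace_smul, hB]
  -- anticommutator identities
  have hKW2 : K * (v₂ ⊗ₖ (1 : Matrix (Fin 2) (Fin 2) k)) +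
      (v₂ ⊗ₖ (1 : Matrix (Fin 2) (Fin 2) k)) * K =
      (1 : Matrix (Fin 2) (Fin 2) k) ⊗ₖ sB := by
    rw [hK, hsB, Finset.sum_mul, Finset.mul_sum, ← Finset.sum_add_distrib, kron_sum_right]
    refine Finset.sum_congr rfl fun m _ => ?_
    rw [← Matrix.mul_kronecker_mul, ← Matrix.mul_kronecker_mul, mul_one, one_mul,
      ← Matrix.add_kronecker, anticomm2 (A m) v₂ (hA m) hv₂, Matrix.smul_kronecker,
      Matrix.kronecker_smul]
  have hKW1 : K * ((1 : Matrix (Fin 2) (Fin 2) k) ⊗ₖ v₁) +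
      ((1 : Matrix (Fin 2) (Fin 2) k) ⊗ₖ v₁) * K =
      sA ⊗ₖ (1 : Matrix (Fin 2) (Fin 2) k) := by
    rw [hK, hsA, Finset.sum_mul, Finset.mul_sum, ← Finset.sum_add_distrib, kron_sum_left]
    refine Finset.sum_congr rfl fun m _ => ?_
    rw [← Matrix.mul_kronecker_mul, ← Matrix.mul_kronecker_mul, mul_one, one_mul,
      ← Matrix.kronecker_add, anticomm2 (B m) v₁ (hB m) hv₁, Matrix.kronecker_smul,
      Matrix.smul_kronecker]
  -- commutator decomposition
  have hcomm : K * U - U * K =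
      ∑ m, ((A m * u₂ - u₂ * A m) ⊗ₖ B m + A m ⊗ₖ (B m * u₁ - u₁ * B m)) := by
    rw [hK, hU, Finset.sum_mul, Finset.mul_sum, ← Finset.sum_sub_distrib]
    refine Finset.sum_congr rfl fun m _ => ?_
    simp only [mul_add, add_mul, ← Matrix.mul_kronecker_mul, mul_one, one_mul,
      kron_sub_left, kron_sub_right]
    abel
  have hKW2' : K * (v₂ ⊗ₖ (1 : Matrix (Fin 2) (Fin 2) k)) =
      (1 : Matrix (Fin 2) (Fin 2) k) ⊗ₖ sB -
        (v₂ ⊗ₖ (1 : Matrix (Fin 2) (Fin 2) k)) * K := eq_sub_of_add_eq hKW2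
  have hKW1' : K * ((1 : Matrix (Fin 2) (Fin 2) k) ⊗ₖ v₁) =
      sA ⊗ₖ (1 : Matrix (Fin 2) (Fin 2) k) -
        ((1 : Matrix (Fin 2) (Fin 2) k) ⊗ₖ v₁) * K := eq_sub_of_add_eq hKW1
  -- rearrangement: the main equation is equivalent to a decomposition statement
  have hd : ((1 : Matrix (Fin 2 × Fin 2) (Fin 2 × Fin 2) k) + K) *
        ((u₂ - v₂) ⊗ₖ (1 : Matrix (Fin 2) (Fin 2) k) +
          (1 : Matrix (Fin 2) (Fin 2) k) ⊗ₖ (u₁ + v₁)) -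
      ((u₂ + v₂) ⊗ₖ (1 : Matrix (Fin 2) (Fin 2) k) +
          (1 : Matrix (Fin 2) (Fin 2) k) ⊗ₖ
            (c • (1 : Matrix (Fin 2) (Fin 2) k) + u₁ - v₁)) *
        ((1 : Matrix (Fin 2 × Fin 2) (Fin 2 × Fin 2) k) + K) =
      (K * U - U * K) - (c • (1 : Matrix (Fin 2 × Fin 2) (Fin 2 × Fin 2) k) + c • K +
        ((2 : k) • v₂ - sA) ⊗ₖ (1 : Matrix (Fin 2) (Fin 2) k) +
        (1 : Matrix (Fin 2) (Fin 2) k) ⊗ₖ (sB - (2 : k) • v₁)) := by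
    simp only [kron_sub_left, kron_sub_right, Matrix.kronecker_add, Matrix.add_kronecker,
      Matrix.kronecker_smul, Matrix.smul_kronecker, Matrix.one_kronecker_one, hU]
    simp only [mul_add, add_mul, mul_sub, sub_mul, one_mul, mul_one,
      smul_mul_assoc, mul_smul_comm, hKW2', hKW1']
    module
  have key : (((1 : Matrix (Fin 2 × Fin 2) (Fin 2 × Fin 2) k) + K) *
        ((u₂ - v₂) ⊗ₖ (1 : Matrix (Fin 2) (Fin 2) k) +
          (1 : Matrix (Fin 2) (Fin 2) k) ⊗ₖ (u₁ + v₁)) =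
      ((u₂ + v₂) ⊗ₖ (1 : Matrix (Fin 2) (Fin 2) k) +
          (1 : Matrix (Fin 2) (Fin 2) k) ⊗ₖ
            (c • (1 : Matrix (Fin 2) (Fin 2) k) + u₁ - v₁)) *
        ((1 : Matrix (Fin 2 × Fin 2) (Fin 2 × Fin 2) k) + K)) ↔
      (K * U - U * K = c • (1 : Matrix (Fin 2 × Fin 2) (Fin 2 × Fin 2) k) + c • K +
        ((2 : k) • v₂ - sA) ⊗ₖ (1 : Matrix (Fin 2) (Fin 2) k) +
        (1 : Matrix (Fin 2) (Fin 2) k) ⊗ₖ (sB - (2 : k) • v₁)) := by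
    rw [← sub_eq_zero, hd, sub_eq_zero]
  rw [key]
  have hD1 : ∀ m, (B m * u₁ - u₁ * B m).trace = 0 := fun m => by
    rw [Matrix.trace_sub, Matrix.trace_mul_comm, sub_self]
  have hD2 : ∀ m, (A m * u₂ - u₂ * A m).trace = 0 := fun m => by
    rw [Matrix.trace_sub, Matrix.trace_mul_comm, sub_self]
  have hptr2K : ptr2 k K = 0 := by
    rw [hK, map_sum]
    simp [ptr2_kron, hB]
  have hptr1K : ptr1 k K = 0 := by
    rw [hK, map_sum]
    simp [ptr1_kron, hA]
  constructor
  · intro h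
    have hc : c = 0 := by
      have ht := congrArg Matrix.trace h
      rw [Matrix.trace_sub, Matrix.trace_mul_comm, sub_self] at ht
      simp only [Matrix.trace_add, Matrix.trace_smul, Matrix.trace_one, htK,
        Matrix.trace_kronecker, Matrix.trace_sub, htsA, htsB, hv₁, hv₂,
        Fintype.card_prod, Fintype.card_fin] at ht
      norm_num at ht
      exact ht
    have hA2 : sA = (2 : k) • v₂ := by
      have h2 := congrArg (ptr2 k) h
      rw [hcomm] at h2
      have hL : ptr2 k (∑ m, ((A m * u₂ - u₂ * A m) ⊗ₖ B m
          + A m ⊗ₖ (B m * u₁ - u₁ * B m))) = 0 := by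
        rw [map_sum]
        refine Finset.sum_eq_zero fun m _ => ?_
        rw [map_add, ptr2_kron, ptr2_kron, hB m, hD1 m, zero_smul, zero_smul, add_zero]
      rw [hL, map_add, map_add, map_add, map_smul, map_smul, ptr2_one, hptr2K,
        ptr2_kron, ptr2_kron, Matrix.trace_one, hc] at h2
      simp only [Matrix.trace_sub, Matrix.trace_smul, htsB, hv₁, Fintype.card_fin,
        smul_zero, zero_smul, zero_add, add_zero, mul_zero, sub_zero] at h2
      rw [eq_comm, smul_eq_zero] at h2
      rcases h2 with h2 | h2
      · exact absurd h2 (by norm_num)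
      · exact (sub_eq_zero.mp h2).symm
    have hB2 : sB = (2 : k) • v₁ := by
      have h1 := congrArg (ptr1 k) h
      rw [hcomm] at h1
      have hL : ptr1 k (∑ m, ((A m * u₂ - u₂ * A m) ⊗ₖ B m
          + A m ⊗ₖ (B m * u₁ - u₁ * B m))) = 0 := by
        rw [map_sum]
        refine Finset.sum_eq_zero fun m _ => ?_
        rw [map_add, ptr1_kron, ptr1_kron, hA m, hD2 m, zero_smul, zero_smul, add_zero]
      rw [hL, map_add, map_add, map_add, map_smul, map_smul, ptr1_one, hptr1K,
        ptr1_kron, ptr1_kron, Matrix.trace_one, hc] at h1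
      simp only [Matrix.trace_sub, Matrix.trace_smul, htsA, hv₂, Fintype.card_fin,
        smul_zero, zero_smul, zero_add, add_zero, mul_zero, sub_zero] at h1
      rw [eq_comm, smul_eq_zero] at h1
      rcases h1 with h1 | h1
      · exact absurd h1 (by norm_num)
      · exact sub_eq_zero.mp h1
    refine ⟨hc, ?_, hB2, hA2⟩
    rw [hc, hA2, hB2] at h
    simp only [zero_smul, sub_self, Matrix.kronecker_zero, Matrix.zero_kronecker,
      zero_add, add_zero] at h
    exact (sub_eq_zero.mp h).symm
  · rintro ⟨rfl, hcm, h3, h4⟩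
    rw [h3, h4, ← hcm]
    simp
end
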